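/- arXiv:1303.6406 — 4 statements merged into one kernel-verified Lean document; each statement's English description precedes it below -/
import Mathlib

section
/- Let r be a positive integer. For each α ∈ Δ set r_α = r / gcd(r, d_α) and α' = r_α α. Then Δ' = {α' : α ∈ Δ} is a reduced crystallographic root system in V whose Weyl group equals W, the set {α_i' : α_i ∈ Π} is a base of Δ', and {α' : α ∈ Δ⁺} is the corresponding set of positive roots of Δ'. -/
open scoped Pointwise

namespace ZetaCenter

variable {V : Type*} [AddCommGroup V] [Module ℚ V]

/-- The coroot `α^∨ = 2α/(α,α)` of a vector `α` with respect to a bilinear form. -/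
noncomputable def coroot (B : V →ₗ[ℚ] V →ₗ[ℚ] ℚ) (α : V) : V :=
  (2 / B α α) • α

/-- `Δ` is a (crystallographic-style) root system in `V` with respect to `B`:
finite, not containing `0`, spanning `V`, and closed under the reflections `s_α`. -/
def IsRootSystem (B : V →ₗ[ℚ] V →ₗ[ℚ] ℚ) (Δ : Set V) : Prop :=
  Δ.Finite ∧ (0 : V) ∉ Δ ∧ Submodule.span ℚ Δ = ⊤ ∧
    ∀ α ∈ Δ, ∀ β ∈ Δ, β - B β (coroot B α) • α ∈ Δ

/-- Crystallographic condition: all pairings `(β, α^∨)` are integers. -/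
def IsCrystallographic (B : V →ₗ[ℚ] V →ₗ[ℚ] ℚ) (Δ : Set V) : Prop :=
  ∀ α ∈ Δ, ∀ β ∈ Δ, ∃ n : ℤ, B β (coroot B α) = n

/-- Reducedness: the only multiples of a root that are roots are `±` itself. -/
def IsReduced (Δ : Set V) : Prop :=
  ∀ α ∈ Δ, ∀ c : ℚ, c • α ∈ Δ → c = 1 ∨ c = -1

/-- Irreducibility: `Δ` admits no decomposition into two orthogonal nonempty parts. -/
def IsIrreducible (B : V →ₗ[ℚ] V →ₗ[ℚ] ℚ) (Δ : Set V) : Prop :=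
  Δ.Nonempty ∧ ∀ Δ₁ Δ₂ : Set V, Δ = Δ₁ ∪ Δ₂ →
    (∀ α ∈ Δ₁, ∀ β ∈ Δ₂, B α β = 0) → Δ₁ = ∅ ∨ Δ₂ = ∅

/-- The Weyl group of `Δ`: the subgroup of `GL(V)` generated by the reflections `s_α`, `α ∈ Δ`. -/
def weylGroup (B : V →ₗ[ℚ] V →ₗ[ℚ] ℚ) (Δ : Set V) : Subgroup (V ≃ₗ[ℚ] V) :=
  Subgroup.closure {w | ∃ α ∈ Δ, ∀ v : V, w v = v - B v (coroot B α) • α}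

/-- `Pi` is a base (set of simple roots) of `Δ`: a linearly independent subset such that every
root is a nonnegative-integral or nonpositive-integral combination of elements of `Pi`. -/
def IsBase (Δ Pi : Set V) : Prop :=
  Pi ⊆ Δ ∧ LinearIndependent ℚ ((↑) : Pi → V) ∧
    ∀ α ∈ Δ, α ∈ AddSubmonoid.closure Pi ∨ -α ∈ AddSubmonoid.closure Pi

/-- The positive system corresponding to the base `Pi`. -/
def positiveRoots (Δ Pi : Set V) : Set V :=
  {α | α ∈ Δ ∧ α ∈ AddSubmonoid.closure Pi}

/-- `β` is a short root of `Δ`. -/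
def IsShort (B : V →ₗ[ℚ] V →ₗ[ℚ] ℚ) (Δ : Set V) (β : V) : Prop :=
  β ∈ Δ ∧ ∀ γ ∈ Δ, B β β ≤ B γ γ

/-- The lattice `{λ ∈ V : (λ, α^∨) ∈ c(α)·ℤ for all α ∈ Δ}`. -/
noncomputable def scaledWeightLattice (B : V →ₗ[ℚ] V →ₗ[ℚ] ℚ) (Δ : Set V) (c : V → ℚ) :
    AddSubgroup V where
  carrier := {lam | ∀ α ∈ Δ, ∃ n : ℤ, B lam (coroot B α) = c α * n}
  zero_mem' := fun α _ => ⟨0, by simp⟩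
  add_mem' := by
    intro x y hx hy α hα
    obtain ⟨m, hm⟩ := hx α hα
    obtain ⟨k, hk⟩ := hy α hα
    exact ⟨m + k, by rw [map_add, LinearMap.add_apply, hm, hk]; push_cast; ring⟩
  neg_mem' := by
    intro x hx α hα
    obtain ⟨m, hm⟩ := hx α hα
    exact ⟨-m, by rw [map_neg, LinearMap.neg_apply, hm]; push_cast; ring⟩

/-- The weight lattice `P` of `Δ`. -/
noncomputable def weightLattice (B : V →ₗ[ℚ] V →ₗ[ℚ] ℚ) (Δ : Set V) : AddSubgroup V :=
  scaledWeightLattice B Δ fun _ => 1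

/-- The coroot lattice `Q^∨` of `Δ`. -/
noncomputable def corootLattice (B : V →ₗ[ℚ] V →ₗ[ℚ] ℚ) (Δ : Set V) : AddSubgroup V :=
  AddSubgroup.closure (coroot B '' Δ)




lemma arith_dvd (r a b : ℕ) (hr : 0 < r) (n m : ℤ)
    (h : (a : ℤ) * n = (b : ℤ) * m) :
    ((r / Nat.gcd r a : ℕ) : ℤ) ∣ ((r / Nat.gcd r b : ℕ) : ℤ) * n := by
  -- step 1 : gcd r b ∣ gcd r a * n
  have h1 : (Nat.gcd r b : ℤ) ∣ (Nat.gcd r a : ℤ) * n := by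
    have hrb : (Nat.gcd r b : ℤ) ∣ (r : ℤ) * n :=
      Dvd.dvd.mul_right (Int.natCast_dvd_natCast.mpr (Nat.gcd_dvd_left r b)) n
    have hab : (Nat.gcd r b : ℤ) ∣ (a : ℤ) * n := by
      rw [h]
      exact Dvd.dvd.mul_right (Int.natCast_dvd_natCast.mpr (Nat.gcd_dvd_right r b)) m
    have hg := Int.dvd_gcd hrb hab
    rw [Int.gcd_mul_right] at hg
    rw [← Int.dvd_natAbs]
    have : (((r:ℤ).gcd a * n.natAbs : ℕ) : ℤ) = (((Nat.gcd r a : ℤ) * n).natAbs : ℤ) := by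
      rw [Int.natAbs_mul]
      simp [Int.gcd_natCast_natCast]
    rw [← this]; exact_mod_cast hg
  obtain ⟨t, ht⟩ := h1
  set ga := Nat.gcd r a with hga
  set gb := Nat.gcd r b with hgb
  have hgapos : 0 < ga := Nat.gcd_pos_of_pos_left a hr
  have hgbpos : 0 < gb := Nat.gcd_pos_of_pos_left b hr
  have e1 : ((r / ga : ℕ) : ℤ) * ga = r := by
    rw [← Nat.cast_mul, Nat.div_mul_cancel (Nat.gcd_dvd_left r a)]
  have e2 : ((r / gb : ℕ) : ℤ) * gb = r := by
    rw [← Nat.cast_mul, Nat.div_mul_cancel (Nat.gcd_dvd_left r b)]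
  refine ⟨t, ?_⟩
  have hne : ((ga : ℤ) * gb) ≠ 0 := by positivity
  apply mul_left_cancel₀ hne
  linear_combination ((ga:ℤ) * n) * e2 - ((gb:ℤ) * t) * e1 + (r:ℤ) * ht

variable (B : V →ₗ[ℚ] V →ₗ[ℚ] ℚ)

lemma coroot_smul' {c : ℚ} (hc : c ≠ 0) {α : V} (hα : B α α ≠ 0) :
    coroot B (c • α) = c⁻¹ • coroot B α := by
  unfold coroot
  simp only [map_smul, LinearMap.smul_apply, smul_eq_mul, smul_smul]
  congr 1
  field_simp

lemma pairing_smul {c : ℚ} (hc : c ≠ 0) {α : V} (hα : B α α ≠ 0) (v : V) :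
    B v (coroot B (c • α)) • (c • α) = B v (coroot B α) • α := by
  rw [coroot_smul' B hc hα, map_smul, smul_eq_mul, smul_smul]
  congr 1
  field_simp

lemma pair_self_two {α : V} (hα : B α α ≠ 0) : B α (coroot B α) = 2 := by
  unfold coroot
  rw [map_smul, smul_eq_mul]
  field_simp

lemma refl_norm (hsymm : ∀ x y : V, B x y = B y x) {α : V} (hα : B α α ≠ 0) (β : V) :
    B (β - B β (coroot B α) • α) (β - B β (coroot B α) • α) = B β β := by
  have hs := hsymm α β
  simp only [coroot, map_sub, map_smul, LinearMap.sub_apply, LinearMap.smul_apply, smul_eq_mul]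
  field_simp
  ring_nf
  rw [hs]
  ring

lemma coroot_reflect (hsymm : ∀ x y : V, B x y = B y x) {α β : V} (hα : B α α ≠ 0)
    (hβ : B β β ≠ 0) :
    coroot B (β - B β (coroot B α) • α) = coroot B β - B α (coroot B β) • coroot B α := by
  have hn := refl_norm B hsymm hα β
  unfold coroot
  rw [show B (β - B β ((2 / B α α) • α) • α) (β - B β ((2 / B α α) • α) • α) = B β β from hn]
  rw [smul_sub]
  congr 1
  rw [smul_smul, smul_smul, map_smul, smul_eq_mul, map_smul, smul_eq_mul]
  congr 1
  rw [hsymm α β]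
  field_simp

lemma coroot_neg (α : V) : coroot B (-α) = - coroot B α := by
  unfold coroot
  simp [map_neg]



set_option maxHeartbeats 1600000 in
theorem statement0
    {V : Type*} [AddCommGroup V] [Module ℚ V] [FiniteDimensional ℚ V]
    (B : V →ₗ[ℚ] V →ₗ[ℚ] ℚ)
    (hsymm : ∀ x y : V, B x y = B y x)
    (hpos : ∀ v : V, v ≠ 0 → 0 < B v v)
    (Δ : Set V) (hRS : IsRootSystem B Δ) (hred : IsReduced Δ)
    (hcrys : IsCrystallographic B Δ) (hirr : IsIrreducible B Δ)
    (Pi : Set V) (hbase : IsBase Δ Pi)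
    (d_ : V → ℕ)
    (hd : ∀ α ∈ Δ, ∀ β : V, IsShort B Δ β → B α α = (d_ α : ℚ) * B β β)
    (r : ℕ) (hr : 0 < r)
    (f : V → V) (hf : ∀ α : V, f α = ((r / Nat.gcd r (d_ α) : ℕ) : ℚ) • α) :
    IsRootSystem B (f '' Δ) ∧
    IsReduced (f '' Δ) ∧
    IsCrystallographic B (f '' Δ) ∧
    weylGroup B (f '' Δ) = weylGroup B Δ ∧
    IsBase (f '' Δ) (f '' Pi) ∧
    positiveRoots (f '' Δ) (f '' Pi) = f '' positiveRoots Δ Pi := by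
  classical
  obtain ⟨hfin, h0, hspan, hrefl⟩ := hRS
  obtain ⟨hPiΔ, hPiLI, hPiGen⟩ := hbase
  -- a short root
  obtain ⟨β₀, hβ₀Δ, hβ₀min⟩ : ∃ x ∈ Δ, ∀ γ ∈ Δ, B x x ≤ B γ γ := by
    obtain ⟨y, hy⟩ := hirr.1
    obtain ⟨x, hx, hmin⟩ := Finset.exists_min_image hfin.toFinset (fun γ => B γ γ)
      ⟨y, hfin.mem_toFinset.mpr hy⟩
    exact ⟨x, hfin.mem_toFinset.mp hx, fun γ hγ => hmin γ (hfin.mem_toFinset.mpr hγ)⟩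
  have hqpos : ∀ α ∈ Δ, 0 < B α α := fun α hα =>
    hpos α (fun h => h0 (h ▸ hα))
  have hB₀ : 0 < B β₀ β₀ := hqpos _ hβ₀Δ
  have hd' : ∀ α ∈ Δ, B α α = (d_ α : ℚ) * B β₀ β₀ := fun α hα => hd α hα β₀ ⟨hβ₀Δ, hβ₀min⟩
  have hdeq : ∀ α ∈ Δ, ∀ β ∈ Δ, B α α = B β β → d_ α = d_ β := by
    intro α hα β hβ h
    have h2 : (d_ α : ℚ) * B β₀ β₀ = (d_ β : ℚ) * B β₀ β₀ := by
      rw [← hd' α hα, ← hd' β hβ]; exact h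
    exact_mod_cast mul_right_cancel₀ hB₀.ne' h2
  set R : V → ℕ := fun α => r / Nat.gcd r (d_ α) with hRdef
  have hfR : ∀ α : V, f α = (R α : ℚ) • α := fun α => hf α
  have hRpos : ∀ α : V, 0 < R α :=
    fun α => Nat.div_pos (Nat.le_of_dvd hr (Nat.gcd_dvd_left _ _)) (Nat.gcd_pos_of_pos_left _ hr)
  have hRne : ∀ α : V, ((R α : ℕ) : ℚ) ≠ 0 := fun α => by
    exact_mod_cast (hRpos α).ne'
  have hReq : ∀ α ∈ Δ, ∀ β ∈ Δ, B α α = B β β → R α = R β := by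
    intro α hα β hβ h
    simp only [hRdef, hdeq α hα β hβ h]
  have hneg_mem : ∀ α ∈ Δ, -α ∈ Δ := by
    intro α hα
    have h2 := hrefl α hα α hα
    rw [pair_self_two B (hqpos α hα).ne'] at h2
    have : α - (2:ℚ) • α = -α := by rw [two_smul]; abel
    rwa [this] at h2
  have hqneg : ∀ α : V, B (-α) (-α) = B α α := by intro α; simp
  have hRneg : ∀ α ∈ Δ, R (-α) = R α := fun α hα =>
    hReq _ (hneg_mem α hα) α hα (hqneg α)
  have hfneg : ∀ α ∈ Δ, f (-α) = - f α := by
    intro α hα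
    rw [hfR, hfR, hRneg α hα, smul_neg]
  have hfnz : ∀ α ∈ Δ, f α ≠ 0 := by
    intro α hα h
    rw [hfR] at h
    rcases smul_eq_zero.mp h with h' | h'
    · exact hRne α h'
    · exact h0 (h' ▸ hα)
  -- the key reflection compatibility
  have hfSβ : ∀ α ∈ Δ, ∀ β ∈ Δ,
      f β - B (f β) (coroot B (f α)) • f α = f (β - B β (coroot B α) • α) := by
    intro α hα β hβ
    have hqα := (hqpos α hα).ne'
    have hRrefl : R (β - B β (coroot B α) • α) = R β :=
      hReq _ (hrefl α hα β hβ) β hβ (refl_norm B hsymm hqα β)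
    rw [hfR β, hfR α, hfR (β - B β (coroot B α) • α), hRrefl]
    rw [pairing_smul B (hRne α) hqα]
    rw [map_smul, LinearMap.smul_apply, smul_eq_mul, smul_sub, smul_smul]
  -- pairing rescale identity
  have hpair_scale : ∀ α ∈ Δ, ∀ v : V,
      B v (coroot B (f α)) • f α = B v (coroot B α) • α := by
    intro α hα v
    rw [hfR α]
    exact pairing_smul B (hRne α) (hqpos α hα).ne' v
  ------------------------------------------------------------------
  -- component 1 : root system
  have hRS' : IsRootSystem B (f '' Δ) := by
    refine ⟨hfin.image f, ?_, ?_, ?_⟩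
    · rintro ⟨α, hα, hfa⟩
      exact hfnz α hα hfa
    · rw [eq_top_iff, ← hspan]
      apply Submodule.span_le.mpr
      intro α hα
      have : α = (R α : ℚ)⁻¹ • f α := by
        rw [hfR, smul_smul, inv_mul_cancel₀ (hRne α), one_smul]
      rw [this]
      exact Submodule.smul_mem _ _ (Submodule.subset_span ⟨α, hα, rfl⟩)
    · rintro _ ⟨α, hα, rfl⟩ _ ⟨β, hβ, rfl⟩
      rw [hfSβ α hα β hβ]
      exact ⟨_, hrefl α hα β hβ, rfl⟩
  ------------------------------------------------------------------
  -- component 2 : reduced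
  have hred' : IsReduced (f '' Δ) := by
    rintro _ ⟨α, hα, rfl⟩ c hc
    obtain ⟨β, hβ, hfb⟩ := hc
    have hβα : β = ((R β : ℚ)⁻¹ * (c * R α)) • α := by
      rw [hfR β, hfR α, smul_smul] at hfb
      rw [mul_smul, ← hfb, smul_smul, inv_mul_cancel₀ (hRne β), one_smul]
    rcases hred α hα _ (hβα ▸ hβ) with h1 | h1
    · have hβα' : β = α := by rw [hβα, h1, one_smul]
      rw [hβα'] at hfb
      left
      have h2 : (c - 1) • f α = 0 := by rw [sub_smul, one_smul, ← hfb, sub_self]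
      rcases smul_eq_zero.mp h2 with h' | h'
      · linarith [sub_eq_zero.mp h']
      · exact absurd h' (hfnz α hα)
    · have hβα' : β = -α := by rw [hβα, h1, neg_one_smul]
      rw [hβα', hfneg α hα] at hfb
      right
      have h2 : (c + 1) • f α = 0 := by
        rw [add_smul, one_smul, ← hfb, neg_add_cancel]
      rcases smul_eq_zero.mp h2 with h' | h'
      · linarith [h']
      · exact absurd h' (hfnz α hα)
  ------------------------------------------------------------------
  -- symmetric pairing relation
  have hco : ∀ x y : V, B x x ≠ 0 → B y (coroot B x) * B x x = 2 * B y x := by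
    intro x y hx
    unfold coroot
    rw [map_smul, smul_eq_mul]
    field_simp
  have hrelΔ : ∀ α ∈ Δ, ∀ β ∈ Δ, ∀ n m : ℤ, B β (coroot B α) = n → B α (coroot B β) = m →
      (d_ α : ℤ) * n = (d_ β : ℤ) * m := by
    intro α hα β hβ n m hn hm
    have e1 := hco α β (hqpos α hα).ne'
    have e2 := hco β α (hqpos β hβ).ne'
    rw [hn] at e1
    rw [hm] at e2
    rw [hd' α hα] at e1
    rw [hd' β hβ] at e2
    rw [hsymm α β] at e2
    have h4 : (n:ℚ) * ((d_ α:ℚ) * B β₀ β₀) = (m:ℚ) * ((d_ β:ℚ) * B β₀ β₀) := by rw [e1, e2]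
    have h3 : (d_ α : ℚ) * n = (d_ β : ℚ) * m :=
      mul_right_cancel₀ hB₀.ne' (by linear_combination h4)
    exact_mod_cast h3
  ------------------------------------------------------------------
  -- component 3 : crystallographic
  have hcrys' : IsCrystallographic B (f '' Δ) := by
    rintro _ ⟨α, hα, rfl⟩ _ ⟨β, hβ, rfl⟩
    obtain ⟨n, hn⟩ := hcrys α hα β hβ
    obtain ⟨m, hm⟩ := hcrys β hβ α hα
    have hrel := hrelΔ α hα β hβ n m hn hm
    obtain ⟨z, hz⟩ := arith_dvd r (d_ α) (d_ β) hr n m hrel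
    refine ⟨z, ?_⟩
    have hzQ : ((R β : ℕ) : ℚ) * n = ((R α : ℕ) : ℚ) * z := by exact_mod_cast hz
    have hv : B (f β) (coroot B (f α)) = (R β : ℚ) * (((R α : ℚ))⁻¹ * n) := by
      rw [hfR β, hfR α, coroot_smul' B (hRne α) (hqpos α hα).ne']
      simp only [map_smul, LinearMap.smul_apply, smul_eq_mul]
      rw [hn]
      ring
    rw [hv]
    have hRα := hRne α
    field_simp
    linear_combination hzQ
  ------------------------------------------------------------------
  -- component 4 : Weyl group
  have hweyl : weylGroup B (f '' Δ) = weylGroup B Δ := by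
    unfold weylGroup
    congr 1
    ext w
    constructor
    · rintro ⟨_, ⟨α, hα, rfl⟩, hw⟩
      exact ⟨α, hα, fun v => by rw [hw v, hpair_scale α hα v]⟩
    · rintro ⟨α, hα, hw⟩
      exact ⟨f α, ⟨α, hα, rfl⟩, fun v => by rw [hw v, ← hpair_scale α hα v]⟩
  ------------------------------------------------------------------
  -- Pi is a basis
  have hPiFin : Pi.Finite := hfin.subset hPiΔ
  haveI : Fintype ↥Pi := hPiFin.fintype
  have hclspan : ∀ x ∈ AddSubmonoid.closure Pi, x ∈ Submodule.span ℚ Pi := by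
    intro x hx
    refine AddSubmonoid.closure_induction (fun y hy => Submodule.subset_span hy)
      (Submodule.zero_mem _) (fun a b _ _ ha hb => Submodule.add_mem _ ha hb) hx
  have hPiSpan : ⊤ ≤ Submodule.span ℚ (Set.range ((↑) : Pi → V)) := by
    rw [Subtype.range_coe, ← hspan]
    apply Submodule.span_le.mpr
    intro α hα
    rcases hPiGen α hα with h | h
    · exact hclspan α h
    · have := Submodule.neg_mem _ (hclspan _ h)
      simpa using this
  set b : Module.Basis ↥Pi ℚ V := Module.Basis.mk hPiLI hPiSpan with hbdef
  have hb : ∀ i : ↥Pi, b i = ↑i := fun i => Module.Basis.mk_apply _ _ i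
  clear_value b
  -- natural coordinates of positive elements
  have hcoordNat : ∀ x ∈ AddSubmonoid.closure Pi, ∀ i : ↥Pi, ∃ k : ℕ, b.repr x i = k := by
    intro x hx
    refine AddSubmonoid.closure_induction ?_ ?_ ?_ hx
    · intro y hy i
      have hy' : y = b ⟨y, hy⟩ := by rw [hb]
      rw [hy', b.repr_self, Finsupp.single_apply]
      by_cases h : (⟨y, hy⟩ : ↥Pi) = i
      · exact ⟨1, by rw [if_pos h]; norm_num⟩
      · exact ⟨0, by rw [if_neg h]; norm_num⟩
    · intro i; exact ⟨0, by simp⟩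
    · intro u v _ _ hu hv i
      obtain ⟨k1, h1⟩ := hu i
      obtain ⟨k2, h2⟩ := hv i
      exact ⟨k1 + k2, by rw [map_add, Finsupp.add_apply, h1, h2]; push_cast; ring⟩
  -- the height functional
  set g : V →ₗ[ℚ] ℚ := ∑ i : ↥Pi, b.coord i with hgdef
  have hgx : ∀ x : V, g x = ∑ i : ↥Pi, b.repr x i := by
    intro x
    simp [hgdef, LinearMap.sum_apply, Module.Basis.coord_apply]
  have hg1 : ∀ j : ↥Pi, g (b j) = 1 := by
    intro j
    rw [hgx]
    simp [Module.Basis.repr_self, Finsupp.single_apply]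
  clear_value g
  have hgpos : ∀ x ∈ AddSubmonoid.closure Pi, 0 ≤ g x ∧ (g x = 0 → x = 0) := by
    intro x hx
    have hnn : ∀ i : ↥Pi, 0 ≤ b.repr x i := by
      intro i
      obtain ⟨k, hk⟩ := hcoordNat x hx i
      rw [hk]; positivity
    constructor
    · rw [hgx]; exact Finset.sum_nonneg fun i _ => hnn i
    · intro h0'
      rw [hgx] at h0'
      have hz : ∀ i ∈ Finset.univ, b.repr x i = 0 :=
        (Finset.sum_eq_zero_iff_of_nonneg (fun i _ => hnn i)).mp h0'
      have hrepr : b.repr x = 0 := Finsupp.ext fun i => hz i (Finset.mem_univ i)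
      simpa using b.repr.map_eq_zero_iff.mp hrepr
  ------------------------------------------------------------------
  -- coroot integrality
  have hcorootInt : ∀ k : ℕ, ∀ γ ∈ Δ, γ ∈ AddSubmonoid.closure Pi → g γ ≤ (k : ℚ) →
      coroot B γ ∈ AddSubgroup.closure (coroot B '' Pi) := by
    intro k
    induction k with
    | zero =>
      intro γ hγ hγcl hgk
      exfalso
      have hp := hgpos γ hγcl
      have h00 : g γ = 0 := le_antisymm (by exact_mod_cast hgk) hp.1
      exact h0 ((hp.2 h00) ▸ hγ)
    | succ k ih =>
      intro γ hγ hγcl hgk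
      by_cases hγPi : γ ∈ Pi
      · exact AddSubgroup.subset_closure ⟨γ, hγPi, rfl⟩
      have hex : ∃ i : ↥Pi, 0 < B γ (b i) := by
        by_contra hcon
        push_neg at hcon
        have e := b.sum_repr γ
        have hBγ : B γ γ = ∑ i : ↥Pi, b.repr γ i * B γ (b i) := by
          nth_rw 2 [← e]
          rw [map_sum]
          simp [map_smul, smul_eq_mul]
        have hle : B γ γ ≤ 0 := by
          rw [hBγ]
          apply Finset.sum_nonpos
          intro i _
          obtain ⟨kᵢ, hk⟩ := hcoordNat γ hγcl i
          rw [hk]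
          exact mul_nonpos_of_nonneg_of_nonpos (by positivity) (hcon i)
        linarith [hqpos γ hγ]
      obtain ⟨i, hi⟩ := hex
      have hαiPi : (b i : V) ∈ Pi := by rw [hb]; exact i.2
      have hαiΔ : (b i : V) ∈ Δ := hPiΔ hαiPi
      obtain ⟨n, hn⟩ := hcrys (b i) hαiΔ γ hγ
      have hnpos : (0:ℚ) < n := by
        rw [← hn]
        unfold coroot
        rw [map_smul, smul_eq_mul]
        exact mul_pos (div_pos two_pos (hqpos _ hαiΔ)) hi
      have hn1 : 1 ≤ n := by exact_mod_cast hnpos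
      set γ' : V := γ - (n : ℚ) • b i with hγ'def
      have hγ'Δ : γ' ∈ Δ := by
        have := hrefl (b i) hαiΔ γ hγ
        rwa [hn] at this
      have hγ'repr : ∀ j : ↥Pi, b.repr γ' j =
          b.repr γ j - (n : ℚ) * (if i = j then 1 else 0) := by
        intro j
        rw [hγ'def, map_sub, Finsupp.sub_apply, map_smul, Finsupp.smul_apply, smul_eq_mul,
          b.repr_self, Finsupp.single_apply]
      have hpairγ' : B γ' (coroot B (b i)) = -n := by
        rw [hγ'def, map_sub, LinearMap.sub_apply, hn, map_smul, LinearMap.smul_apply,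
          smul_eq_mul, pair_self_two B (hqpos _ hαiΔ).ne']
        ring
      rcases hPiGen γ' hγ'Δ with hpos' | hneg'
      · -- positive case: induction
        have hle : g γ' ≤ (k : ℚ) := by
          have hstep : g γ' = g γ - (n : ℚ) * g (b i) := by
            rw [hγ'def, map_sub, map_smul, smul_eq_mul]
          rw [hstep, hg1 i]
          push_cast at hgk
          have hn1' : (1:ℚ) ≤ (n:ℚ) := by exact_mod_cast hn1
          linarith
        have hrec := ih γ' hγ'Δ hpos' hle
        obtain ⟨z, hz⟩ := hcrys γ' hγ'Δ (b i) hαiΔ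
        have hγeq : γ = γ' - B γ' (coroot B (b i)) • b i := by
          rw [hpairγ', hγ'def]
          module
        rw [hγeq, coroot_reflect B hsymm (hqpos _ hαiΔ).ne' (hqpos _ hγ'Δ).ne', hz]
        refine AddSubgroup.sub_mem _ hrec ?_
        rw [Int.cast_smul_eq_zsmul]
        exact AddSubgroup.zsmul_mem _ (AddSubgroup.subset_closure (Set.mem_image_of_mem _ hαiPi)) z
      · -- negative case: contradiction, γ must be simple
        exfalso
        have hcoords : ∀ j : ↥Pi, j ≠ i → b.repr γ j = 0 := by
          intro j hj
          obtain ⟨k1, hk1⟩ := hcoordNat γ hγcl j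
          obtain ⟨k2, hk2⟩ := hcoordNat _ hneg' j
          rw [map_neg, Finsupp.neg_apply] at hk2
          have he : b.repr γ' j = b.repr γ j := by
            rw [hγ'repr j, if_neg (fun h => hj h.symm)]
            ring
          rw [he, hk1] at hk2
          have hk10 : (k1 : ℚ) = 0 := by
            have h1 : (0:ℚ) ≤ k1 := by positivity
            have h2 : (0:ℚ) ≤ k2 := by positivity
            linarith
          rw [hk1, hk10]
        have hγval : γ = b.repr γ i • (b i : V) := by
          have e := b.sum_repr γ
          nth_rw 1 [← e]
          apply Finset.sum_eq_single_of_mem i (Finset.mem_univ i)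
          intro j _ hj
          rw [hcoords j hj, zero_smul]
        rcases hred (b i) hαiΔ (b.repr γ i) (by rw [← hγval]; exact hγ) with h1 | h1
        · exact hγPi (by rw [hγval, h1, one_smul]; exact hαiPi)
        · obtain ⟨k1, hk1⟩ := hcoordNat γ hγcl i
          rw [hk1] at h1
          have : (0:ℚ) ≤ k1 := by positivity
          rw [h1] at this
          linarith
  have hcorootIntAll : ∀ γ ∈ Δ, coroot B γ ∈ AddSubgroup.closure (coroot B '' Pi) := by
    intro γ hγ
    rcases hPiGen γ hγ with h | h
    · choose ks hks using hcoordNat γ h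
      have : g γ = ((∑ i : ↥Pi, ks i : ℕ) : ℚ) := by
        rw [hgx]
        push_cast
        exact Finset.sum_congr rfl fun i _ => hks i
      exact hcorootInt _ γ hγ h (le_of_eq this)
    · have hnγ : -γ ∈ Δ := hneg_mem γ hγ
      choose ks hks using hcoordNat _ h
      have : g (-γ) = ((∑ i : ↥Pi, ks i : ℕ) : ℚ) := by
        rw [hgx]
        push_cast
        exact Finset.sum_congr rfl fun i _ => hks i
      have hm := hcorootInt _ _ hnγ h (le_of_eq this)
      rw [coroot_neg] at hm
      simpa using AddSubgroup.neg_mem _ hm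
  ------------------------------------------------------------------
  -- coefficient extraction from the coroot lattice
  have hcoordInt : ∀ x ∈ AddSubgroup.closure (coroot B '' Pi), ∀ i : ↥Pi,
      ∃ z : ℤ, b.repr x i = (z : ℚ) * (2 / B (b i) (b i)) := by
    intro x hx i
    refine AddSubgroup.closure_induction ?_ ?_ ?_ ?_ hx
    · rintro _ ⟨p, hp, rfl⟩
      have hp' : p = b ⟨p, hp⟩ := by rw [hb]
      by_cases h : (⟨p, hp⟩ : ↥Pi) = i
      · refine ⟨1, ?_⟩
        rw [hp']
        unfold coroot
        rw [map_smul, Finsupp.smul_apply, b.repr_self, Finsupp.single_apply, if_pos h,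
          smul_eq_mul, h]
        ring
      · refine ⟨0, ?_⟩
        rw [hp']
        unfold coroot
        rw [map_smul, Finsupp.smul_apply, b.repr_self, Finsupp.single_apply, if_neg h,
          smul_eq_mul]
        ring
    · exact ⟨0, by simp⟩
    · rintro u v _ _ ⟨z1, h1⟩ ⟨z2, h2⟩
      exact ⟨z1 + z2, by rw [map_add, Finsupp.add_apply, h1, h2]; push_cast; ring⟩
    · rintro u _ ⟨z1, h1⟩
      exact ⟨-z1, by rw [map_neg, Finsupp.neg_apply, h1]; push_cast; ring⟩
  ------------------------------------------------------------------
  -- divisibility of coefficients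
  have hkey : ∀ γ, ∀ hγ : γ ∈ Δ, γ ∈ AddSubmonoid.closure Pi → ∀ i : ↥Pi,
      ∃ kk : ℕ, (kk : ℚ) * (R (b i) : ℚ) = (R γ : ℚ) * b.repr γ i := by
    intro γ hγ hγcl i
    obtain ⟨nᵢ, hnᵢ⟩ := hcoordNat γ hγcl i
    obtain ⟨z, hz⟩ := hcoordInt _ (hcorootIntAll γ hγ) i
    have hαiΔ : (b i : V) ∈ Δ := hPiΔ (by rw [hb]; exact i.2)
    have hqi := (hqpos _ hαiΔ).ne'
    have hqγ := (hqpos γ hγ).ne'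
    have h1 : (2 / B γ γ) * b.repr γ i = (z : ℚ) * (2 / B (b i) (b i)) := by
      rw [← hz]
      unfold coroot
      rw [map_smul, Finsupp.smul_apply, smul_eq_mul]
    have h2 : (nᵢ : ℚ) * B (b i) (b i) = (z : ℚ) * B γ γ := by
      rw [← hnᵢ]
      field_simp at h1
      linear_combination h1
    rw [hd' _ hαiΔ, hd' γ hγ] at h2
    have h4 : (d_ (b i : V) : ℤ) * nᵢ = (d_ γ : ℤ) * z := by
      have h3 : (d_ (b i : V) : ℚ) * (nᵢ : ℚ) = (d_ γ : ℚ) * (z : ℚ) :=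
        mul_right_cancel₀ hB₀.ne' (by linear_combination h2)
      exact_mod_cast h3
    obtain ⟨w, hw⟩ := arith_dvd r (d_ (b i : V)) (d_ γ) hr nᵢ z h4
    have hw0 : 0 ≤ w := by
      by_contra hneg
      push_neg at hneg
      have hL : (0:ℤ) ≤ ((R γ : ℕ) : ℤ) * (nᵢ : ℤ) := by positivity
      have hRip : (0:ℤ) < ((R (b i : V) : ℕ) : ℤ) := Int.natCast_pos.mpr (hRpos (b i))
      nlinarith [hw]
    refine ⟨w.toNat, ?_⟩
    have hwQ : ((R γ : ℕ) : ℚ) * (nᵢ : ℚ) = ((R (b i : V) : ℕ) : ℚ) * (w : ℚ) := by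
      exact_mod_cast hw
    rw [hnᵢ]
    have hwn : ((w.toNat : ℕ) : ℚ) = (w : ℚ) := by exact_mod_cast Int.toNat_of_nonneg hw0
    rw [hwn]
    linear_combination -hwQ
  ------------------------------------------------------------------
  -- positive roots map into the positive cone
  have hfpos : ∀ γ ∈ Δ, γ ∈ AddSubmonoid.closure Pi →
      f γ ∈ AddSubmonoid.closure (f '' Pi) := by
    intro γ hγ hγcl
    choose kk hkk using hkey γ hγ hγcl
    have hkeyQ : ∑ i : ↥Pi, kk i • f (b i) = f γ := by
      have hterm : ∀ i : ↥Pi, kk i • f (b i) = (R γ : ℚ) • (b.repr γ i • b i) := by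
        intro i
        rw [hfR (b i), ← Nat.cast_smul_eq_nsmul ℚ (kk i), smul_smul, smul_smul, hkk i]
      rw [Finset.sum_congr rfl (fun i _ => hterm i), ← Finset.smul_sum, b.sum_repr, ← hfR γ]
    rw [← hkeyQ]
    apply AddSubmonoid.sum_mem
    intro i _
    have hmem : f (b i) ∈ f '' Pi := Set.mem_image_of_mem f (by rw [hb]; exact i.2)
    exact AddSubmonoid.nsmul_mem _ (AddSubmonoid.subset_closure hmem) _
  ------------------------------------------------------------------
  -- injectivity of f on Δ
  have hInj : Set.InjOn f Δ := by
    intro p hp q hq h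
    have hqp : q = ((R q : ℚ)⁻¹ * (R p : ℚ)) • p := by
      rw [hfR, hfR] at h
      rw [mul_smul, h, smul_smul, inv_mul_cancel₀ (hRne q), one_smul]
    rcases hred p hp _ (hqp ▸ hq) with h1 | h1
    · rw [hqp, h1, one_smul]
    · exfalso
      have hp1 : (0:ℚ) < (R q : ℚ)⁻¹ * (R p : ℚ) := by
        have h2 : (0:ℚ) < (R q : ℚ) := by exact_mod_cast hRpos q
        have h3 : (0:ℚ) < (R p : ℚ) := by exact_mod_cast hRpos p
        positivity
      rw [h1] at hp1
      linarith
  ------------------------------------------------------------------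
  -- component 5 : base
  have hbase' : IsBase (f '' Δ) (f '' Pi) := by
    refine ⟨Set.image_mono hPiΔ, ?_, ?_⟩
    · have hli : LinearIndependent ℚ (fun x : ↥Pi => f ↑x) := by
        have hw := hPiLI.units_smul (fun i : ↥Pi => Units.mk0 ((R (i : V) : ℕ) : ℚ) (hRne _))
        have : ((fun i : ↥Pi => Units.mk0 ((R (i : V) : ℕ) : ℚ) (hRne _)) • Subtype.val)
            = fun x : ↥Pi => f ↑x := by
          funext i
          show (Units.mk0 ((R (i : V) : ℕ) : ℚ) (hRne _)) • ((i : V)) = f ↑i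
          rw [Units.smul_def, Units.val_mk0, hfR]
        rwa [this] at hw
      exact (linearIndepOn_iff_image (hInj.mono hPiΔ)).mp hli
    · rintro _ ⟨α, hα, rfl⟩
      rcases hPiGen α hα with h | h
      · exact Or.inl (hfpos α hα h)
      · refine Or.inr ?_
        rw [← hfneg α hα]
        exact hfpos _ (hneg_mem α hα) h
  ------------------------------------------------------------------
  -- positivity functional on the image cone
  have hgpos' : ∀ x ∈ AddSubmonoid.closure (f '' Pi), 0 ≤ g x ∧ (g x = 0 → x = 0) := by
    intro x hx
    refine AddSubmonoid.closure_induction ?_ ?_ ?_ hx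
    · rintro _ ⟨p, hp, rfl⟩
      have hgp : g p = 1 := by
        have := hg1 ⟨p, hp⟩
        rwa [hb] at this
      have hgfp : g (f p) = (R p : ℚ) := by
        rw [hfR, map_smul, smul_eq_mul, hgp, mul_one]
      have hRp : (0:ℚ) < (R p : ℚ) := by exact_mod_cast hRpos p
      exact ⟨by rw [hgfp]; linarith, fun h => absurd (hgfp ▸ h) (by linarith)⟩
    · exact ⟨by simp, fun _ => rfl⟩
    · rintro u v _ _ ⟨hu1, hu2⟩ ⟨hv1, hv2⟩
      refine ⟨by rw [map_add]; linarith, fun h => ?_⟩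
      rw [map_add] at h
      rw [hu2 (by linarith), hv2 (by linarith), add_zero]
  ------------------------------------------------------------------
  -- component 6 : positive systems agree
  have hposEq : positiveRoots (f '' Δ) (f '' Pi) = f '' positiveRoots Δ Pi := by
    ext x
    constructor
    · rintro ⟨⟨α, hα, rfl⟩, hcl⟩
      rcases hPiGen α hα with h | h
      · exact ⟨α, ⟨hα, h⟩, rfl⟩
      · exfalso
        have h2 : f (-α) ∈ AddSubmonoid.closure (f '' Pi) := hfpos _ (hneg_mem α hα) h
        rw [hfneg α hα] at h2
        have p1 := hgpos' _ hcl
        have p2 := hgpos' _ h2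
        rw [map_neg] at p2
        have h3 : g (f α) = 0 := by linarith [p1.1, p2.1]
        exact hfnz α hα (p1.2 h3)
    · rintro ⟨α, ⟨hα, hcl⟩, rfl⟩
      exact ⟨⟨α, hα, rfl⟩, hfpos α hα hcl⟩
  exact ⟨hRS', hred', hcrys', hweyl, hbase', hposEq⟩



end ZetaCenter
end

section
/- Let P₁ = {μ ∈ V : (μ, α^∨) ∈ ℤ for all short roots α ∈ Δ} and Q₁^∨ = Σ_{α ∈ Δ, α short} ℤ α^∨. Then the indices [P : P ∩ 2P₁] and [Q₁^∨ : Q₁^∨ ∩ 2Q^∨] are finite and equal: [P : P ∩ 2P₁] = [Q₁^∨ : Q₁^∨ ∩ 2Q^∨]. -/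
open scoped Pointwise

namespace ZetaCenter

variable {V : Type*} [AddCommGroup V] [Module ℚ V]

/-! ### Auxiliary lemmas -/

section Aux

/-- Counting homs into `ZMod 2` from a finite elementary abelian 2-group. -/
lemma card_addMonoidHom_zmod_two (G : Type*) [AddCommGroup G] [Finite G]
    (h2 : ∀ g : G, 2 • g = 0) : Nat.card (G →+ ZMod 2) = Nat.card G := by
  letI : Module (ZMod 2) G := AddCommGroup.zmodModule h2
  have hsmul : ∀ (f : G →+ ZMod 2) (c : ZMod 2) (g : G), f (c • g) = c • f g := by
    intro f c g
    rcases (by decide : ∀ c : ZMod 2, c = 0 ∨ c = 1) c with rfl | rfl <;> simp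
  let e : (G →+ ZMod 2) ≃ (G →ₗ[ZMod 2] ZMod 2) :=
  { toFun := fun f => ⟨⟨f, f.map_add⟩, fun c g => hsmul f c g⟩
    invFun := fun f => f.toAddMonoidHom
    left_inv := fun f => rfl
    right_inv := fun f => rfl }
  rw [Nat.card_congr e]
  haveI : Module.Finite (ZMod 2) G := Module.Finite.of_finite
  haveI : Finite (G →ₗ[ZMod 2] ZMod 2) := Module.finite_of_finite (ZMod 2)
  have hG : Nat.card G = 2 ^ Module.finrank (ZMod 2) G := by
    haveI : Fintype G := Fintype.ofFinite G
    rw [Nat.card_eq_fintype_card, Module.card_eq_pow_finrank (K := ZMod 2) (V := G), ZMod.card]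
  have hD : Nat.card (G →ₗ[ZMod 2] ZMod 2)
      = 2 ^ Module.finrank (ZMod 2) (Module.Dual (ZMod 2) G) := by
    haveI : Fintype (G →ₗ[ZMod 2] ZMod 2) := Fintype.ofFinite _
    rw [Nat.card_eq_fintype_card,
      Module.card_eq_pow_finrank (K := ZMod 2) (V := Module.Dual (ZMod 2) G), ZMod.card]
  rw [hD, hG, Subspace.dual_finrank_eq]

/-- Two finite elementary abelian 2-groups admitting mutually injective pairings into
`ZMod 2` have the same (finite, nonzero) cardinality. -/
lemma card_eq_of_pairing {A B : Type*} [AddCommGroup A] [AddCommGroup B] [Finite B]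
    (hA2 : ∀ a : A, 2 • a = 0) (hB2 : ∀ b : B, 2 • b = 0)
    (Φ : A →+ (B →+ ZMod 2)) (hΦ : Function.Injective Φ)
    (Ψ : B →+ (A →+ ZMod 2)) (hΨ : Function.Injective Ψ) :
    Nat.card A ≠ 0 ∧ Nat.card B ≠ 0 ∧ Nat.card A = Nat.card B := by
  haveI : Finite (B →+ ZMod 2) :=
    Finite.of_injective (fun f => (f : B → ZMod 2)) DFunLike.coe_injective
  haveI : Finite A := Finite.of_injective Φ hΦ
  haveI : Finite (A →+ ZMod 2) :=
    Finite.of_injective (fun f => (f : A → ZMod 2)) DFunLike.coe_injective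
  have h1 : Nat.card A ≤ Nat.card B := by
    calc Nat.card A ≤ Nat.card (B →+ ZMod 2) := Nat.card_le_card_of_injective Φ hΦ
    _ = Nat.card B := card_addMonoidHom_zmod_two B hB2
  have h2 : Nat.card B ≤ Nat.card A := by
    calc Nat.card B ≤ Nat.card (A →+ ZMod 2) := Nat.card_le_card_of_injective Ψ hΨ
    _ = Nat.card A := card_addMonoidHom_zmod_two A hA2
  exact ⟨Nat.card_ne_zero.mpr ⟨⟨0⟩, inferInstance⟩, Nat.card_ne_zero.mpr ⟨⟨0⟩, inferInstance⟩,
    le_antisymm h1 h2⟩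

/-- The subgroup of vectors pairing integrally with a given linear functional. -/
def intDual {V : Type*} [AddCommGroup V] [Module ℚ V] (φ : V →ₗ[ℚ] ℚ) : AddSubgroup V where
  carrier := {q | ∃ n : ℤ, φ q = n}
  zero_mem' := ⟨0, by simp⟩
  add_mem' := by
    rintro x y ⟨m, hm⟩ ⟨k, hk⟩
    exact ⟨m + k, by rw [map_add, hm, hk]; push_cast; ring⟩
  neg_mem' := by
    rintro x ⟨m, hm⟩
    exact ⟨-m, by rw [map_neg, hm]; push_cast; ring⟩

/-- Reduction of an (integral) rational to `ZMod 2`. -/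
def toZMod2 (x : ℚ) : ZMod 2 := (x.num : ZMod 2)

lemma toZMod2_int (n : ℤ) : toZMod2 (n : ℚ) = (n : ZMod 2) := by
  simp [toZMod2]

lemma toZMod2_eq_zero {x : ℚ} {n : ℤ} (h : x = n) (h0 : toZMod2 x = 0) :
    ∃ k : ℤ, x = 2 * k := by
  subst h
  rw [toZMod2_int] at h0
  obtain ⟨k, hk⟩ := (ZMod.intCast_zmod_eq_zero_iff_dvd n 2).mp h0
  exact ⟨k, by rw [hk]; push_cast; ring⟩

variable {V : Type*} [AddCommGroup V] [Module ℚ V]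

lemma mem_scaled_iff (B : V →ₗ[ℚ] V →ₗ[ℚ] ℚ) (Δ : Set V) (c : V → ℚ) (lam : V) :
    lam ∈ scaledWeightLattice B Δ c ↔ ∀ α ∈ Δ, ∃ n : ℤ, B lam (coroot B α) = c α * n :=
  Iff.rfl

/-- Double duality for the coroot lattice: a vector pairing integrally with every element
of the weight lattice lies in the coroot lattice. -/
lemma dual_dual [FiniteDimensional ℚ V]
    (B : V →ₗ[ℚ] V →ₗ[ℚ] ℚ) (hpos : ∀ v : V, v ≠ 0 → 0 < B v v)
    (Δ : Set V) (hfin : Δ.Finite) (h0 : (0 : V) ∉ Δ) (hspan : Submodule.span ℚ Δ = ⊤)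
    (x : V)
    (hx : ∀ lam : V, (∀ α ∈ Δ, ∃ n : ℤ, B lam (coroot B α) = n) → ∃ n : ℤ, B lam x = n) :
    x ∈ corootLattice B Δ := by
  classical
  set N : Submodule ℤ V := Submodule.span ℤ (coroot B '' Δ) with hNdef
  have hN : N.toAddSubgroup = corootLattice B Δ :=
    Submodule.span_int_eq_addSubgroupClosure _
  haveI : Module.Finite ℤ N :=
    Module.Finite.iff_fg.mpr (Submodule.fg_span (hfin.image _))
  haveI : Module.Free ℤ N := by
    haveI : IsAddTorsionFree V := IsAddTorsionFree.of_module_rat V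
    exact Module.free_of_finite_type_torsion_free'
  set ι := Module.Free.ChooseBasisIndex ℤ N with hι
  let b : Module.Basis ι ℤ N := Module.Free.chooseBasis ℤ N
  let v : ι → V := fun i => (b i : V)
  have hliZ : LinearIndependent ℤ v := by
    have := b.linearIndependent
    exact this.map' N.subtype (Submodule.ker_subtype N)
  have hli : LinearIndependent ℚ v := (LinearIndependent.iff_fractionRing ℤ ℚ).mp hliZ
  have hNv : N = Submodule.span ℤ (Set.range v) := by
    have h1 : Submodule.span ℤ (Set.range b) = (⊤ : Submodule ℤ N) := b.span_eq
    have h2 : N = Submodule.map N.subtype ⊤ := by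
      rw [Submodule.map_top, Submodule.range_subtype]
    rw [h2, ← h1, Submodule.map_span]
    congr 1
    rw [← Set.range_comp]
    rfl
  have hsubN : (N : Set V) ⊆ (Submodule.span ℚ (Set.range v) : Set V) := by
    intro y hy
    rw [hNv] at hy
    exact Submodule.span_subset_span ℤ ℚ _ hy
  have hspanv : Submodule.span ℚ (Set.range v) = ⊤ := by
    rw [eq_top_iff, ← hspan, Submodule.span_le]
    intro α hα
    have hc : coroot B α ∈ N := Submodule.subset_span ⟨α, hα, rfl⟩
    have hBα : B α α ≠ 0 := by
      have : α ≠ 0 := fun h => h0 (h ▸ hα)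
      exact (hpos α this).ne'
    have : α = (B α α / 2) • coroot B α := by
      rw [coroot, smul_smul]
      field_simp
      rw [one_smul]
    rw [this]
    exact Submodule.smul_mem _ _ (hsubN hc)
  let Vb : Module.Basis ι ℚ V := Module.Basis.mk hli (by rw [hspanv])
  have hVb : ∀ i, Vb i = v i := fun i => Module.Basis.mk_apply hli _ i
  have hnd : LinearMap.BilinForm.Nondegenerate B := ⟨fun m hm => by
    by_contra h
    exact (hpos m h).ne' (hm m), fun m hm => by
    by_contra h
    exact (hpos m h).ne' (hm m)⟩
  let f : ι → V := LinearMap.BilinForm.dualBasis B hnd Vb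
  have key : ∀ (i : ι) (y : V), B (f i) y = Vb.repr y i := by
    intro i y
    conv_lhs => rw [← Vb.sum_repr y]
    rw [map_sum]
    have : ∀ j, B (f i) (Vb.repr y j • Vb j) = Vb.repr y j * (if j = i then 1 else 0) := by
      intro j
      rw [map_smul]
      rw [LinearMap.BilinForm.apply_dualBasis_left (B := B) hnd Vb i j]
      simp [smul_eq_mul]
    simp only [this]
    simp
  have hintN : ∀ y ∈ N, ∀ i, ∃ n : ℤ, Vb.repr y i = (n : ℚ) := by
    intro y hy
    rw [hNv] at hy
    induction hy using Submodule.span_induction with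
    | mem z hz =>
        obtain ⟨j, rfl⟩ := hz
        intro i
        refine ⟨if j = i then 1 else 0, ?_⟩
        rw [← hVb j, Vb.repr_self]
        simp [Finsupp.single_apply]
    | zero => intro i; exact ⟨0, by simp⟩
    | add z w _ _ hz hw =>
        intro i
        obtain ⟨n, hn⟩ := hz i
        obtain ⟨m, hm⟩ := hw i
        exact ⟨n + m, by rw [map_add]; rw [Finsupp.add_apply, hn, hm]; push_cast; ring⟩
    | smul c z _ hz =>
        intro i
        obtain ⟨n, hn⟩ := hz i
        refine ⟨c * n, ?_⟩
        have : (c : ℤ) • z = (c : ℚ) • z := (Int.cast_smul_eq_zsmul ℚ c z).symm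
        rw [this, map_smul, Finsupp.smul_apply, hn, smul_eq_mul]
        push_cast; ring
  have hf : ∀ i : ι, ∀ α ∈ Δ, ∃ n : ℤ, B (f i) (coroot B α) = n := by
    intro i α hα
    have hc : coroot B α ∈ N := Submodule.subset_span ⟨α, hα, rfl⟩
    obtain ⟨n, hn⟩ := hintN _ hc i
    exact ⟨n, by rw [key i, hn]⟩
  choose m hm using fun i => hx (f i) (hf i)
  have hxN : x ∈ N := by
    have hrep : x = ∑ i, Vb.repr x i • Vb i := (Vb.sum_repr x).symm
    have : x = ∑ i, (m i : ℤ) • v i := by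
      rw [hrep]
      refine Finset.sum_congr rfl fun i _ => ?_
      have hco : Vb.repr x i = (m i : ℚ) := by rw [← key i x, hm i]
      rw [hVb i, hco, Int.cast_smul_eq_zsmul ℚ (m i) (v i)]
    rw [this]
    exact Submodule.sum_mem _ fun i _ => Submodule.smul_mem _ _
      (by rw [hNv]; exact Submodule.subset_span (Set.mem_range_self i))
  rw [← hN]
  exact Submodule.mem_toAddSubgroup N |>.mpr hxN


/-- Finiteness of `closure s / (H ∩ closure s)` when `s` is finite and the quotient has
exponent 2. -/
lemma finite_quotient_of_closure_finite {V : Type*} [AddCommGroup V] (s : Set V)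
    (hs : s.Finite) (H : AddSubgroup V)
    (h2 : ∀ y ∈ AddSubgroup.closure s, 2 • y ∈ H) :
    Finite (↥(AddSubgroup.closure s) ⧸ H.addSubgroupOf (AddSubgroup.closure s)) := by
  classical
  set K := AddSubgroup.closure s with hK
  set H' := H.addSubgroupOf K with hH'
  have h2' : ∀ b : ↥K ⧸ H', 2 • b = 0 := by
    intro b
    refine QuotientAddGroup.induction_on b fun y => ?_
    rw [← QuotientAddGroup.mk_nsmul, QuotientAddGroup.eq_zero_iff,
      AddSubgroup.mem_addSubgroupOf]
    have hc : ((2 • y : ↥K) : V) = 2 • (y : V) := rfl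
    rw [hc]
    exact h2 y.1 y.2
  letI : Module (ZMod 2) (↥K ⧸ H') := AddCommGroup.zmodModule h2'
  set gens : Set (↥K ⧸ H') := (QuotientAddGroup.mk' H') '' (((↑) : ↥K → V) ⁻¹' s) with hgens
  have hmaptop : AddSubgroup.closure gens = ⊤ := by
    have h1 : AddSubgroup.closure (((↑) : ↥K → V) ⁻¹' s) = (⊤ : AddSubgroup ↥K) :=
      AddSubgroup.closure_closure_coe_preimage
    rw [hgens, ← AddMonoidHom.map_closure, h1]
    exact AddSubgroup.map_top_of_surjective _ (QuotientAddGroup.mk'_surjective H')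
  have hgfin : gens.Finite := (hs.preimage Subtype.coe_injective.injOn).image _
  haveI : Module.Finite (ZMod 2) (↥K ⧸ H') := by
    refine ⟨⟨hgfin.toFinset, ?_⟩⟩
    rw [Set.Finite.coe_toFinset]
    have hle : AddSubgroup.closure gens ≤ (Submodule.span (ZMod 2) gens).toAddSubgroup :=
      (AddSubgroup.closure_le _).mpr fun z hz => Submodule.subset_span hz
    refine top_unique fun x _ => ?_
    exact (Submodule.mem_toAddSubgroup _).mp (hle (hmaptop ▸ AddSubgroup.mem_top x))
  exact Module.finite_of_finite (ZMod 2)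

/-- Abstract comparison of relative indices via a `ZMod 2`-valued pairing with exact kernels. -/
lemma relindex_eq_of_pairing {V : Type*} [AddCommGroup V]
    (K1 H1 K2 H2 : AddSubgroup V) (p : V → V → ZMod 2)
    (hpl : ∀ x ∈ K1, ∀ x' ∈ K1, ∀ y ∈ K2, p (x + x') y = p x y + p x' y)
    (hpr : ∀ x ∈ K1, ∀ y ∈ K2, ∀ y' ∈ K2, p x (y + y') = p x y + p x y')
    (hker_l : ∀ x ∈ K1, ((∀ y ∈ K2, p x y = 0) ↔ x ∈ H1))
    (hker_r : ∀ y ∈ K2, ((∀ x ∈ K1, p x y = 0) ↔ y ∈ H2))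
    [Finite (↥K2 ⧸ H2.addSubgroupOf K2)] :
    H1.relIndex K1 ≠ 0 ∧ H2.relIndex K2 ≠ 0 ∧ H1.relIndex K1 = H2.relIndex K2 := by
  classical
  have hzmod : ∀ z : ZMod 2, z + z = 0 := by decide
  set H1' := H1.addSubgroupOf K1 with hH1'
  set H2' := H2.addSubgroupOf K2 with hH2'
  -- the pairing as a hom, in both orders
  let g : ↥K1 →+ (↥K2 →+ ZMod 2) := AddMonoidHom.mk'
    (fun x => AddMonoidHom.mk' (fun y => p x.1 y.1)
      (fun y y' => hpr x.1 x.2 y.1 y.2 y'.1 y'.2))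
    (fun x x' => AddMonoidHom.ext fun y => hpl x.1 x.2 x'.1 x'.2 y.1 y.2)
  let g' : ↥K2 →+ (↥K1 →+ ZMod 2) := AddMonoidHom.mk'
    (fun y => AddMonoidHom.mk' (fun x => p x.1 y.1)
      (fun x x' => hpl x.1 x.2 x'.1 x'.2 y.1 y.2))
    (fun y y' => AddMonoidHom.ext fun x => hpr x.1 x.2 y.1 y.2 y'.1 y'.2)
  -- exponent two of the quotients
  have hA2 : ∀ a : ↥K1 ⧸ H1', 2 • a = 0 := by
    intro a
    refine QuotientAddGroup.induction_on a fun x => ?_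
    rw [← QuotientAddGroup.mk_nsmul, QuotientAddGroup.eq_zero_iff,
      AddSubgroup.mem_addSubgroupOf]
    have hc : ((2 • x : ↥K1) : V) = (x : V) + (x : V) := by
      show (2 : ℕ) • (x : V) = _
      rw [two_smul]
    rw [hc]
    refine (hker_l _ (add_mem x.2 x.2)).mp fun y hy => ?_
    rw [hpl x.1 x.2 x.1 x.2 y hy]
    exact hzmod _
  have hB2 : ∀ b : ↥K2 ⧸ H2', 2 • b = 0 := by
    intro b
    refine QuotientAddGroup.induction_on b fun y => ?_
    rw [← QuotientAddGroup.mk_nsmul, QuotientAddGroup.eq_zero_iff,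
      AddSubgroup.mem_addSubgroupOf]
    have hc : ((2 • y : ↥K2) : V) = (y : V) + (y : V) := by
      show (2 : ℕ) • (y : V) = _
      rw [two_smul]
    rw [hc]
    refine (hker_r _ (add_mem y.2 y.2)).mp fun x hx => ?_
    rw [hpr x hx y.1 y.2 y.1 y.2]
    exact hzmod _
  -- descend the pairing
  have hgH2 : ∀ (x : ↥K1), ∀ y ∈ H2', g x y = 0 := fun x y hy =>
    ((hker_r y.1 y.2).mpr (AddSubgroup.mem_addSubgroupOf.mp hy)) x.1 x.2
  have hgH1 : ∀ (y : ↥K2), ∀ x ∈ H1', g' y x = 0 := fun y x hx =>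
    ((hker_l x.1 x.2).mpr (AddSubgroup.mem_addSubgroupOf.mp hx)) y.1 y.2
  let Φ : ↥K1 →+ ((↥K2 ⧸ H2') →+ ZMod 2) := AddMonoidHom.mk'
    (fun x => QuotientAddGroup.lift H2' (g x) (hgH2 x))
    (fun x x' => AddMonoidHom.ext fun c => QuotientAddGroup.induction_on c fun y => by
      show g (x + x') y = g x y + g x' y
      rw [map_add]; rfl)
  have hΦH1 : ∀ x ∈ H1', Φ x = 0 := fun x hx =>
    AddMonoidHom.ext fun c => QuotientAddGroup.induction_on c fun y => by
      show g x y = 0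
      exact ((hker_l x.1 x.2).mpr (AddSubgroup.mem_addSubgroupOf.mp hx)) y.1 y.2
  let Φbar : (↥K1 ⧸ H1') →+ ((↥K2 ⧸ H2') →+ ZMod 2) :=
    QuotientAddGroup.lift H1' Φ hΦH1
  let Ψ : ↥K2 →+ ((↥K1 ⧸ H1') →+ ZMod 2) := AddMonoidHom.mk'
    (fun y => QuotientAddGroup.lift H1' (g' y) (hgH1 y))
    (fun y y' => AddMonoidHom.ext fun c => QuotientAddGroup.induction_on c fun x => by
      show g' (y + y') x = g' y x + g' y' x
      rw [map_add]; rfl)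
  have hΨH2 : ∀ y ∈ H2', Ψ y = 0 := fun y hy =>
    AddMonoidHom.ext fun c => QuotientAddGroup.induction_on c fun x => by
      show g' y x = 0
      exact ((hker_r y.1 y.2).mpr (AddSubgroup.mem_addSubgroupOf.mp hy)) x.1 x.2
  let Ψbar : (↥K2 ⧸ H2') →+ ((↥K1 ⧸ H1') →+ ZMod 2) :=
    QuotientAddGroup.lift H2' Ψ hΨH2
  -- injectivity
  have hΦinj : Function.Injective Φbar := by
    rw [injective_iff_map_eq_zero]
    intro a
    refine QuotientAddGroup.induction_on a fun x hx => ?_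
    rw [QuotientAddGroup.eq_zero_iff, AddSubgroup.mem_addSubgroupOf]
    refine (hker_l x.1 x.2).mp fun y hy => ?_
    have := DFunLike.congr_fun hx (QuotientAddGroup.mk (⟨y, hy⟩ : ↥K2))
    exact this
  have hΨinj : Function.Injective Ψbar := by
    rw [injective_iff_map_eq_zero]
    intro b
    refine QuotientAddGroup.induction_on b fun y hy => ?_
    rw [QuotientAddGroup.eq_zero_iff, AddSubgroup.mem_addSubgroupOf]
    refine (hker_r y.1 y.2).mp fun x hx => ?_
    have := DFunLike.congr_fun hy (QuotientAddGroup.mk (⟨x, hx⟩ : ↥K1))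
    exact this
  obtain ⟨hA0, hB0, hcard⟩ := card_eq_of_pairing hA2 hB2 Φbar hΦinj Ψbar hΨinj
  have e1 : H1.relIndex K1 = Nat.card (↥K1 ⧸ H1') := AddSubgroup.index_eq_card _
  have e2 : H2.relIndex K2 = Nat.card (↥K2 ⧸ H2') := AddSubgroup.index_eq_card _
  exact ⟨by rw [e1]; exact hA0, by rw [e2]; exact hB0, by rw [e1, e2]; exact hcard⟩

end Aux

/-- With `P₁ = {μ : (μ, α^∨) ∈ ℤ for all short α}` and
`Q₁^∨` the lattice generated by the short coroots, the indices `[P : P ∩ 2P₁]` and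
`[Q₁^∨ : Q₁^∨ ∩ 2Q^∨]` are finite and equal. -/
theorem statement3
    {V : Type*} [AddCommGroup V] [Module ℚ V] [FiniteDimensional ℚ V]
    (B : V →ₗ[ℚ] V →ₗ[ℚ] ℚ)
    (hsymm : ∀ x y : V, B x y = B y x)
    (hpos : ∀ v : V, v ≠ 0 → 0 < B v v)
    (Δ : Set V) (hRS : IsRootSystem B Δ) (hred : IsReduced Δ)
    (hcrys : IsCrystallographic B Δ) (hirr : IsIrreducible B Δ)
    (Pi : Set V) (hbase : IsBase Δ Pi) :
    ((2 : ℚ) • scaledWeightLattice B {β | IsShort B Δ β} (fun _ => 1)).relIndex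
        (weightLattice B Δ) ≠ 0 ∧
    ((2 : ℚ) • corootLattice B Δ).relIndex
        (AddSubgroup.closure (coroot B '' {β | IsShort B Δ β})) ≠ 0 ∧
    ((2 : ℚ) • scaledWeightLattice B {β | IsShort B Δ β} (fun _ => 1)).relIndex
        (weightLattice B Δ) =
      ((2 : ℚ) • corootLattice B Δ).relIndex
        (AddSubgroup.closure (coroot B '' {β | IsShort B Δ β})) := by
  classical
  obtain ⟨hfin, hzero, hspan, -⟩ := hRS
  set S : Set V := {β | IsShort B Δ β} with hSdef
  have hSsub : S ⊆ Δ := fun β hβ => hβ.1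
  have hQ₁leQ : AddSubgroup.closure (coroot B '' S) ≤ corootLattice B Δ :=
    AddSubgroup.closure_mono (Set.image_mono hSsub)
  have hPmem : ∀ lam : V, lam ∈ weightLattice B Δ ↔
      ∀ α ∈ Δ, ∃ n : ℤ, B lam (coroot B α) = n := by
    intro lam
    constructor
    · intro h α hα
      obtain ⟨n, hn⟩ := h α hα
      exact ⟨n, by rw [hn, one_mul]⟩
    · intro h α hα
      obtain ⟨n, hn⟩ := h α hα
      exact ⟨n, by rw [hn, one_mul]⟩
  have hP₁mem : ∀ lam : V, lam ∈ scaledWeightLattice B S (fun _ => 1) ↔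
      ∀ α ∈ S, ∃ n : ℤ, B lam (coroot B α) = n := by
    intro lam
    constructor
    · intro h α hα
      obtain ⟨n, hn⟩ := h α hα
      exact ⟨n, by rw [hn, one_mul]⟩
    · intro h α hα
      obtain ⟨n, hn⟩ := h α hα
      exact ⟨n, by rw [hn, one_mul]⟩
  have hQle : ∀ lam : V, lam ∈ weightLattice B Δ →
      ∀ q ∈ corootLattice B Δ, ∃ n : ℤ, B lam q = n := by
    intro lam hlam q hq
    have hle : corootLattice B Δ ≤ intDual (B lam) := by
      rw [corootLattice]
      refine (AddSubgroup.closure_le _).mpr ?_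
      rintro _ ⟨α, hα, rfl⟩
      exact (hPmem lam).mp hlam α hα
    exact hle hq
  have hQ₁le : ∀ lam : V, lam ∈ scaledWeightLattice B S (fun _ => 1) →
      ∀ q ∈ AddSubgroup.closure (coroot B '' S), ∃ n : ℤ, B lam q = n := by
    intro lam hlam q hq
    have hle : AddSubgroup.closure (coroot B '' S) ≤ intDual (B lam) := by
      refine (AddSubgroup.closure_le _).mpr ?_
      rintro _ ⟨α, hα, rfl⟩
      exact (hP₁mem lam).mp hlam α hα
    exact hle hq
  have h2cast : ((2 : ℤ) : ZMod 2) = 0 := by decide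
  haveI : Finite (↥(AddSubgroup.closure (coroot B '' S)) ⧸
      (((2 : ℚ) • corootLattice B Δ).addSubgroupOf (AddSubgroup.closure (coroot B '' S)))) := by
    refine finite_quotient_of_closure_finite _ ((hfin.subset hSsub).image _) _ ?_
    intro y hy
    refine (AddSubgroup.mem_smul_pointwise_iff_exists _ _ _).mpr ⟨y, hQ₁leQ hy, ?_⟩
    rw [two_smul, two_smul]
  refine relindex_eq_of_pairing (weightLattice B Δ)
    ((2 : ℚ) • scaledWeightLattice B S (fun _ => 1))
    (AddSubgroup.closure (coroot B '' S)) ((2 : ℚ) • corootLattice B Δ)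
    (fun x y => toZMod2 (B x y)) ?_ ?_ ?_ ?_
  · intro x hx x' hx' y hy
    obtain ⟨n, hn⟩ := hQle x hx y (hQ₁leQ hy)
    obtain ⟨m, hm⟩ := hQle x' hx' y (hQ₁leQ hy)
    have hsum : B (x + x') y = ((n + m : ℤ) : ℚ) := by
      rw [map_add, LinearMap.add_apply, hn, hm]; push_cast; ring
    show toZMod2 (B (x + x') y) = toZMod2 (B x y) + toZMod2 (B x' y)
    rw [hsum, hn, hm, toZMod2_int, toZMod2_int, toZMod2_int]
    push_cast; ring
  · intro x hx y hy y' hy'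
    obtain ⟨n, hn⟩ := hQle x hx y (hQ₁leQ hy)
    obtain ⟨m, hm⟩ := hQle x hx y' (hQ₁leQ hy')
    have hsum : B x (y + y') = ((n + m : ℤ) : ℚ) := by
      rw [map_add, hn, hm]; push_cast; ring
    show toZMod2 (B x (y + y')) = toZMod2 (B x y) + toZMod2 (B x y')
    rw [hsum, hn, hm, toZMod2_int, toZMod2_int, toZMod2_int]
    push_cast; ring
  · intro x hx
    constructor
    · intro hv
      refine (AddSubgroup.mem_smul_pointwise_iff_exists _ _ _).mpr
        ⟨(2 : ℚ)⁻¹ • x, ?_, smul_inv_smul₀ two_ne_zero x⟩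
      rw [hP₁mem]
      intro α hα
      obtain ⟨n, hn⟩ := (hPmem x).mp hx α (hSsub hα)
      obtain ⟨k, hk⟩ := toZMod2_eq_zero hn
        (hv (coroot B α) (AddSubgroup.subset_closure ⟨α, hα, rfl⟩))
      refine ⟨k, ?_⟩
      rw [map_smul, LinearMap.smul_apply, smul_eq_mul, hk]
      push_cast; ring
    · intro hx2 y hy
      obtain ⟨μ, hμ, hμx⟩ := (AddSubgroup.mem_smul_pointwise_iff_exists _ _ _).mp hx2
      obtain ⟨k, hk⟩ := hQ₁le μ hμ y hy
      have hint : B x y = ((2 * k : ℤ) : ℚ) := by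
        rw [← hμx, map_smul, LinearMap.smul_apply, smul_eq_mul, hk]; push_cast; ring
      show toZMod2 (B x y) = 0
      rw [hint, toZMod2_int, Int.cast_mul, h2cast, zero_mul]
  · intro y hy
    constructor
    · intro hv
      refine (AddSubgroup.mem_smul_pointwise_iff_exists _ _ _).mpr
        ⟨(2 : ℚ)⁻¹ • y, ?_, smul_inv_smul₀ two_ne_zero y⟩
      refine dual_dual B hpos Δ hfin hzero hspan _ ?_
      intro lam hlam
      have hlamP : lam ∈ weightLattice B Δ := (hPmem lam).mpr hlam
      obtain ⟨n, hn⟩ := hQle lam hlamP y (hQ₁leQ hy)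
      obtain ⟨k, hk⟩ := toZMod2_eq_zero hn (hv lam hlamP)
      refine ⟨k, ?_⟩
      rw [map_smul, smul_eq_mul, hk]
      push_cast; ring
    · intro hy2 x hx
      obtain ⟨q, hq, hqy⟩ := (AddSubgroup.mem_smul_pointwise_iff_exists _ _ _).mp hy2
      obtain ⟨k, hk⟩ := hQle x hx q hq
      have hint : B x y = ((2 * k : ℤ) : ℚ) := by
        rw [← hqy, map_smul, smul_eq_mul, hk]; push_cast; ring
      show toZMod2 (B x y) = 0
      rw [hint, toZMod2_int, Int.cast_mul, h2cast, zero_mul]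

end ZetaCenter
end

section
/- Assume d ≤ 2, i.e., (α,α)/(β,β) ≤ 2 for all α, β ∈ Δ. Then Σ_{α ∈ Δ, α short} ℤ α^∨ + 2Q^∨ = Σ_{α ∈ Π, α short} ℤ α^∨ + 2Q^∨; that is, modulo 2Q^∨ the lattice generated by all short coroots is already generated by the short simple coroots. -/
open scoped Pointwise

namespace ZetaCenter

variable {V : Type*} [AddCommGroup V] [Module ℚ V]

set_option maxHeartbeats 2000000 in
/-- Assuming `d ≤ 2`, modulo `2Q^∨` the lattice generated by all short coroots is
already generated by the short simple coroots:
`Σ_{α short} ℤα^∨ + 2Q^∨ = Σ_{α ∈ Pi short} ℤα^∨ + 2Q^∨`. -/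
theorem statement4
    {V : Type*} [AddCommGroup V] [Module ℚ V] [FiniteDimensional ℚ V]
    (B : V →ₗ[ℚ] V →ₗ[ℚ] ℚ)
    (hsymm : ∀ x y : V, B x y = B y x)
    (hpos : ∀ v : V, v ≠ 0 → 0 < B v v)
    (Δ : Set V) (hRS : IsRootSystem B Δ) (hred : IsReduced Δ)
    (hcrys : IsCrystallographic B Δ) (hirr : IsIrreducible B Δ)
    (Pi : Set V) (hbase : IsBase Δ Pi)
    (hd2 : ∀ α ∈ Δ, ∀ β ∈ Δ, B α α ≤ 2 * B β β) :
    AddSubgroup.closure (coroot B '' {β | IsShort B Δ β}) ⊔ (2 : ℚ) • corootLattice B Δ =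
      AddSubgroup.closure (coroot B '' (Pi ∩ {β | IsShort B Δ β})) ⊔
        (2 : ℚ) • corootLattice B Δ := by
  classical
  obtain ⟨hfin, h0, hspan, hrefl⟩ := hRS
  obtain ⟨hPiΔ, hli, hdecomp⟩ := hbase
  have hne : ∀ α ∈ Δ, α ≠ (0:V) := fun α hα h => h0 (h ▸ hα)
  have hBpos : ∀ α ∈ Δ, 0 < B α α := fun α hα => hpos α (hne α hα)
  have hcorootneg : ∀ α : V, coroot B (-α) = - coroot B α := by
    intro α; simp [coroot]
  have hnegmem : ∀ α ∈ Δ, -α ∈ Δ := by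
    intro α hα
    have h2 : B α (coroot B α) = 2 := by
      have := (hBpos α hα).ne'
      simp only [coroot, map_smul, smul_eq_mul]
      field_simp
    have := hrefl α hα α hα
    rw [h2] at this
    convert this using 1
    module
  have hshortneg : ∀ α ∈ Δ, IsShort B Δ α → IsShort B Δ (-α) := by
    intro α hα hsh
    refine ⟨hnegmem α hα, fun γ hγ => ?_⟩
    simpa using hsh.2 γ hγ
  -- the height functional
  have hli' : LinearIndepOn ℚ id Pi := hli
  set bs := hli'.extend (Set.subset_univ Pi) with hbs
  let b : Module.Basis bs ℚ V := Module.Basis.extend hli'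
  set f : V →ₗ[ℚ] ℚ := b.constr ℚ (fun i => if (i : V) ∈ Pi then (1:ℚ) else 0) with hfdef
  have hf1 : ∀ p ∈ Pi, f p = 1 := by
    intro p hp
    have hpbs : p ∈ bs := hli'.subset_extend (Set.subset_univ Pi) hp
    have hbp : b ⟨p, hpbs⟩ = p := Module.Basis.extend_apply_self hli' ⟨p, hpbs⟩
    rw [hfdef, ← hbp, Module.Basis.constr_basis]
    simp [hp]
  have hfprop : ∀ x ∈ AddSubmonoid.closure Pi,
      (∃ k : ℤ, f x = k ∧ 0 ≤ k) ∧ (f x = 0 → x = 0) ∧ (f x = 1 → x ∈ Pi) := by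
    intro x hx
    induction hx using AddSubmonoid.closure_induction with
    | mem y hy =>
      refine ⟨⟨1, by rw [hf1 y hy]; norm_num, by norm_num⟩, ?_, fun _ => hy⟩
      intro h; rw [hf1 y hy] at h; norm_num at h
    | zero => exact ⟨⟨0, by simp, le_refl _⟩, fun _ => rfl, by simp⟩
    | add y z hy hz ihy ihz =>
      obtain ⟨⟨ky, hky, hky0⟩, hy0, hy1⟩ := ihy
      obtain ⟨⟨kz, hkz, hkz0⟩, hz0, hz1⟩ := ihz
      refine ⟨⟨ky + kz, by rw [map_add, hky, hkz]; push_cast; ring, by omega⟩, ?_, ?_⟩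
      · intro h
        rw [map_add, hky, hkz] at h
        have h1 : ky + kz = 0 := by exact_mod_cast h
        have : ky = 0 ∧ kz = 0 := by omega
        rw [hy0 (by rw [hky]; exact_mod_cast congrArg Int.cast this.1),
          hz0 (by rw [hkz]; exact_mod_cast congrArg Int.cast this.2), add_zero]
      · intro h
        rw [map_add, hky, hkz] at h
        have h1 : ky + kz = 1 := by exact_mod_cast h
        rcases (by omega : ky = 0 ∧ kz = 1 ∨ ky = 1 ∧ kz = 0) with ⟨e1, e2⟩ | ⟨e1, e2⟩
        · rw [hy0 (by rw [hky, e1]; norm_num), zero_add]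
          exact hz1 (by rw [hkz, e2]; norm_num)
        · rw [hz0 (by rw [hkz, e2]; norm_num), add_zero]
          exact hy1 (by rw [hky, e1]; norm_num)
  set Sh := {β : V | IsShort B Δ β} with hSh
  set Qc := AddSubgroup.closure (coroot B '' (Pi ∩ Sh)) ⊔ (2:ℚ) • corootLattice B Δ with hQc
  have key : ∀ N : ℕ, ∀ α ∈ Δ, α ∈ AddSubmonoid.closure Pi → IsShort B Δ α →
      f α ≤ (N : ℚ) → coroot B α ∈ Qc := by
    intro N
    induction N with
    | zero =>
      intro α hα hcl hsh hle
      obtain ⟨⟨k, hk, hk0⟩, hz, _⟩ := hfprop α hcl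
      have hk' : (k : ℚ) ≤ 0 := by rw [← hk]; simpa using hle
      have : k = 0 := by exact_mod_cast le_antisymm (by exact_mod_cast hk') hk0
      exact absurd (hz (by rw [hk, this]; norm_num)) (hne α hα)
    | succ N IH =>
      intro α hα hcl hsh hle
      by_cases hαPi : α ∈ Pi
      · exact (le_sup_left : _ ≤ Qc) (AddSubgroup.subset_closure ⟨α, ⟨hαPi, hsh⟩, rfl⟩)
      obtain ⟨⟨k, hk, hk0⟩, hz, h1⟩ := hfprop α hcl
      have hleq : (k:ℚ) ≤ (N:ℚ) + 1 := by
        rw [hk] at hle; push_cast at hle; exact hle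
      have hk2 : 2 ≤ k := by
        rcases (by omega : k = 0 ∨ k = 1 ∨ 2 ≤ k) with e | e | e
        · exact absurd (hz (by rw [hk, e]; norm_num)) (hne α hα)
        · exact absurd (h1 (by rw [hk, e]; norm_num)) hαPi
        · exact e
      -- find a simple root pairing positively with α
      have hex : ∃ p ∈ Pi, 0 < B α p := by
        by_contra hcon
        push_neg at hcon
        have hall : ∀ x ∈ AddSubmonoid.closure Pi, B α x ≤ 0 := by
          intro x hx
          induction hx using AddSubmonoid.closure_induction with
          | mem y hy => exact hcon y hy
          | zero => simp
          | add y z hy hz ihy ihz => rw [map_add]; linarith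
        linarith [hall α hcl, hBpos α hα]
      obtain ⟨p, hpPi, hc⟩ := hex
      have hpΔ : p ∈ Δ := hPiΔ hpPi
      have ha : 0 < B α α := hBpos α hα
      have hb : 0 < B p p := hBpos p hpΔ
      obtain ⟨m, hm⟩ := hcrys p hpΔ α hα
      obtain ⟨n, hn⟩ := hcrys α hα p hpΔ
      have hmval : (m : ℚ) * B p p = 2 * B α p := by
        rw [← hm]; simp only [coroot, map_smul, smul_eq_mul]; field_simp
      have hnval : (n : ℚ) * B α α = 2 * B α p := by
        rw [← hn]; simp only [coroot, map_smul, smul_eq_mul]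
        rw [hsymm p α]; field_simp
      have hmpos : 0 < m := by
        have : (0:ℚ) < (m:ℚ) * B p p := by rw [hmval]; linarith
        have : (0:ℚ) < (m:ℚ) := by nlinarith
        exact_mod_cast this
      have hnpos : 0 < n := by
        have : (0:ℚ) < (n:ℚ) * B α α := by rw [hnval]; linarith
        have : (0:ℚ) < (n:ℚ) := by nlinarith
        exact_mod_cast this
      -- Cauchy-Schwarz (strict)
      have hindep : B p p • α - B α p • p ≠ 0 := by
        intro hv
        have hαp : α = (B α p / B p p) • p := by
          have hv' : B p p • α = B α p • p := sub_eq_zero.mp hv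
          have h5 := congrArg (fun v => (B p p)⁻¹ • v) hv'
          simpa [smul_smul, inv_mul_cancel₀ hb.ne', div_eq_inv_mul] using h5
        rcases hred p hpΔ (B α p / B p p) (by rw [← hαp]; exact hα) with e | e
        · rw [e, one_smul] at hαp; exact hαPi (hαp ▸ hpPi)
        · rw [e, neg_one_smul] at hαp
          have : f α = -1 := by rw [hαp, map_neg, hf1 p hpPi]
          rw [hk] at this
          have : k = -1 := by exact_mod_cast this
          omega
      have hCS : (B α p)^2 < B α α * B p p := by
        have h3 := hpos _ hindep
        have hvv : B (B p p • α - B α p • p) (B p p • α - B α p • p) =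
            B p p * (B α α * B p p - (B α p)^2) := by
          simp only [map_sub, map_smul, LinearMap.sub_apply, LinearMap.smul_apply,
            smul_eq_mul]
          rw [hsymm p α]
          ring
        rw [hvv] at h3
        nlinarith
      have hmn3 : m * n ≤ 3 := by
        have h4 : ((m * n : ℤ) : ℚ) < 4 := by
          push_cast
          nlinarith
        have : (m * n : ℤ) < 4 := by exact_mod_cast h4
        omega
      have hm3 : m ≤ 3 := by nlinarith
      -- the reflected root
      set β := α - (m : ℚ) • p with hβdef
      have hβΔ : β ∈ Δ := by
        have := hrefl p hpΔ α hα
        rwa [hm] at this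
      have hβlen : B β β = B α α := by
        simp only [hβdef, map_sub, map_smul, LinearMap.sub_apply, LinearMap.smul_apply,
          smul_eq_mul]
        have := hsymm α p
        nlinarith [hmval]
      have hβshort : IsShort B Δ β := ⟨hβΔ, fun γ hγ => by rw [hβlen]; exact hsh.2 γ hγ⟩
      have hfβ : f β = f α - (m : ℚ) := by
        rw [hβdef, map_sub, map_smul, hf1 p hpPi, smul_eq_mul, mul_one]
      have hcorβ : coroot B α = coroot B β + (n : ℚ) • coroot B p := by
        rw [coroot, coroot, coroot, hβlen, hβdef]
        rw [smul_sub, smul_smul, smul_smul]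
        have hs : 2 / B α α * (m : ℚ) = (n : ℚ) * (2 / B p p) := by
          field_simp
          nlinarith [hmval, hnval]
        rw [hs]
        abel
      have hβmem : coroot B β ∈ Qc := by
        rcases hdecomp β hβΔ with hcl' | hcl'
        · refine IH β hβΔ hcl' hβshort ?_
          rw [hfβ, hk]
          have : (1:ℚ) ≤ (m:ℚ) := by exact_mod_cast hmpos
          linarith
        · have h2k : (2:ℚ) ≤ (k:ℚ) := by exact_mod_cast hk2
          have hN1 : (1:ℚ) ≤ (N:ℚ) := by linarith
          have hres := IH (-β) (hnegmem β hβΔ) hcl' (hshortneg β hβΔ hβshort) ?_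
          · rw [hcorootneg] at hres
            exact (neg_mem_iff (H := Qc)).mp hres
          · rw [map_neg, hfβ, hk]
            have h3m : (m:ℚ) ≤ 3 := by exact_mod_cast hm3
            linarith
      have hpmem : (n : ℚ) • coroot B p ∈ Qc := by
        by_cases hpsh : IsShort B Δ p
        · have hmem : coroot B p ∈ Qc :=
            (le_sup_left : _ ≤ Qc) (AddSubgroup.subset_closure ⟨p, ⟨hpPi, hpsh⟩, rfl⟩)
          have := AddSubgroup.zsmul_mem Qc hmem n
          rwa [← Int.cast_smul_eq_zsmul ℚ] at this
        · -- p is long, so n = 2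
          have hab : B α α < B p p := by
            have : ¬ ∀ γ ∈ Δ, B p p ≤ B γ γ := fun h => hpsh ⟨hpΔ, h⟩
            push_neg at this
            obtain ⟨γ, hγ, hlt⟩ := this
            linarith [hsh.2 γ hγ]
          have hba2 : B p p ≤ 2 * B α α := hd2 p hpΔ α hα
          have hn2 : n = 2 := by
            have hrel : (n : ℚ) * B α α = (m : ℚ) * B p p := by rw [hmval, hnval]
            have hmq : (0:ℚ) < (m:ℚ) := by exact_mod_cast hmpos
            have hmn : m < n := by
              have h7 : (m:ℚ) * B α α < (m:ℚ) * B p p := by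
                exact mul_lt_mul_of_pos_left hab hmq
              have : (m:ℚ) < (n:ℚ) := by
                rw [← hrel] at h7
                exact lt_of_mul_lt_mul_right h7 ha.le
              exact_mod_cast this
            have hmm : m * m < 3 :=
              lt_of_lt_of_le (mul_lt_mul_of_pos_left hmn hmpos) hmn3
            have hm1 : m = 1 := by
              interval_cases m <;> omega
            have hle2 : (n:ℚ) * B α α ≤ 2 * B α α := by
              rw [hrel, hm1]; push_cast; linarith
            have hn2' : (n:ℚ) ≤ 2 := le_of_mul_le_mul_right hle2 ha
            have : n ≤ 2 := by exact_mod_cast hn2'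
            omega
          have hQ : coroot B p ∈ corootLattice B Δ :=
            AddSubgroup.subset_closure ⟨p, hpΔ, rfl⟩
          have hmem2 : (2:ℚ) • coroot B p ∈ (2:ℚ) • corootLattice B Δ :=
            Set.smul_mem_smul_set hQ
          rw [hn2]
          push_cast
          exact (le_sup_right : _ ≤ Qc) hmem2
      rw [hcorβ]
      exact Qc.add_mem hβmem hpmem
  refine le_antisymm (sup_le ?_ le_sup_right) (sup_le ?_ le_sup_right)
  · rw [AddSubgroup.closure_le]
    rintro x ⟨α, hαsh, rfl⟩
    have hαsh' : IsShort B Δ α := hαsh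
    have hαΔ : α ∈ Δ := hαsh'.1
    rcases hdecomp α hαΔ with hcl | hcl
    · obtain ⟨⟨k, hk, hk0⟩, -, -⟩ := hfprop α hcl
      exact key k.toNat α hαΔ hcl hαsh' (by rw [hk]; exact_mod_cast Int.self_le_toNat k)
    · obtain ⟨⟨k, hk, hk0⟩, -, -⟩ := hfprop (-α) hcl
      have hres := key k.toNat (-α) (hnegmem α hαΔ) hcl (hshortneg α hαΔ hαsh')
        (by rw [hk]; exact_mod_cast Int.self_le_toNat k)
      rw [hcorootneg] at hres
      exact (neg_mem_iff (H := Qc)).mp hres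
  · refine le_trans (AddSubgroup.closure_mono ?_) le_sup_left
    exact Set.image_mono Set.inter_subset_right


end ZetaCenter
end

section
/- Assume r > d, set r_α = r / gcd(r, d_α) for α ∈ Δ, let P' = {μ ∈ V : (μ, α^∨) ∈ r_α ℤ for all α ∈ Δ}, and let ρ̃ = (1/2) Σ_{α ∈ Δ⁺} d_α α^∨. Then for every w ∈ W and every λ ∈ P' one has ζ^{(wλ − λ, 2ρ̃)} = 1; in particular the twisted action of W on the group algebra ℂ[2P] given by w ∘ e(2λ) = ζ^{(wλ − λ, 2ρ̃)} e(2wλ) restricts on the subalgebra ℂ[2P'] to the ordinary permutation action w · e(2λ) = e(2wλ). -/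
open scoped Pointwise

namespace ZetaCenter

variable {V : Type*} [AddCommGroup V] [Module ℚ V]

/-- Assume `r > d` and set `r_α = r / gcd(r, d_α)`,
`P' = {μ : (μ, α^∨) ∈ r_α ℤ for all α}`, `ρ̃ = ½ Σ_{α ∈ Δ⁺} d_α α^∨`.  Then for every `w ∈ W`
and `λ ∈ P'` the pairing `(wλ - λ, 2ρ̃)` is an integer `n` with `ζ^n = 1`; in particular the
twisted `W`-action `w ∘ e(2λ) = ζ^{(wλ-λ,2ρ̃)} e(2wλ)` on `ℂ[2P]` restricts on `ℂ[2P']` to the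
ordinary permutation action. -/
theorem statement10
    {V : Type*} [AddCommGroup V] [Module ℚ V] [FiniteDimensional ℚ V]
    (B : V →ₗ[ℚ] V →ₗ[ℚ] ℚ)
    (hsymm : ∀ x y : V, B x y = B y x)
    (hpos : ∀ v : V, v ≠ 0 → 0 < B v v)
    (Δ : Set V) (hRS : IsRootSystem B Δ) (hred : IsReduced Δ)
    (hcrys : IsCrystallographic B Δ) (hirr : IsIrreducible B Δ)
    (Pi : Set V) (hbase : IsBase Δ Pi)
    (d_ : V → ℕ)
    (hd : ∀ α ∈ Δ, ∀ β : V, IsShort B Δ β → B α α = (d_ α : ℚ) * B β β)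
    (ℓ : ℕ) (hℓ : 0 < ℓ) (ζ : ℂ) (hζ : IsPrimitiveRoot ζ ℓ)
    (r : ℕ) (hr : r = orderOf (ζ ^ 2))
    (hrd : ∀ α ∈ Δ, d_ α < r)
    (T : Finset V) (hT : (T : Set V) = positiveRoots Δ Pi)
    (ρt : V) (hρ : ρt = (2⁻¹ : ℚ) • ∑ α ∈ T, (d_ α : ℚ) • coroot B α) :
    ∀ w ∈ weylGroup B Δ,
      ∀ lam ∈ scaledWeightLattice B Δ (fun α => ((r / Nat.gcd r (d_ α) : ℕ) : ℚ)),
        ∃ n : ℤ, B (w lam - lam) ((2 : ℚ) • ρt) = n ∧ ζ ^ n = 1 := by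
  classical
  obtain ⟨hfin, h0, hspan, hrefl⟩ := hRS
  obtain ⟨hPiΔ, hli, hcl⟩ := hbase
  have hne0 : ∀ α ∈ Δ, α ≠ (0 : V) := fun α hα h => h0 (h ▸ hα)
  have hBpos : ∀ α ∈ Δ, 0 < B α α := fun α hα => hpos α (hne0 α hα)
  have hBne : ∀ α ∈ Δ, B α α ≠ 0 := fun α hα => (hBpos α hα).ne'
  have hcorg : ∀ γ y : V, B y (coroot B γ) = 2 / B γ γ * B y γ := by
    intro γ y
    simp [coroot, smul_eq_mul]
  have hpair2 : ∀ α ∈ Δ, B α (coroot B α) = 2 := by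
    intro α hα
    rw [hcorg]
    field_simp [hBne α hα]
  have hnegmem : ∀ α ∈ Δ, -α ∈ Δ := by
    intro α hα
    have h := hrefl α hα α hα
    rw [hpair2 α hα] at h
    have : α - (2 : ℚ) • α = -α := by
      rw [two_smul]; abel
    rwa [this] at h
  -- short root
  obtain ⟨β₀, hβ₀Δ, hβ₀min⟩ : ∃ β₀ ∈ Δ, ∀ γ ∈ Δ, B β₀ β₀ ≤ B γ γ := by
    obtain ⟨α₀, hα₀⟩ := hirr.1
    obtain ⟨β₀, hmem, hmin⟩ := hfin.toFinset.exists_min_image (fun γ => B γ γ)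
      ⟨α₀, hfin.mem_toFinset.mpr hα₀⟩
    exact ⟨β₀, hfin.mem_toFinset.mp hmem, fun γ hγ => hmin γ (hfin.mem_toFinset.mpr hγ)⟩
  have hb0pos : 0 < B β₀ β₀ := hBpos β₀ hβ₀Δ
  have hdEq : ∀ α ∈ Δ, B α α = (d_ α : ℚ) * B β₀ β₀ := fun α hα => hd α hα β₀ ⟨hβ₀Δ, hβ₀min⟩
  have hdpos : ∀ α ∈ Δ, (0 : ℚ) < (d_ α : ℚ) := by
    intro α hα
    have h := hdEq α hα
    nlinarith [hBpos α hα]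
  have hdcongr : ∀ α ∈ Δ, ∀ β ∈ Δ, B α α = B β β → d_ α = d_ β := by
    intro α hα β hβ h
    have h1 := hdEq α hα
    have h2 := hdEq β hβ
    have : (d_ α : ℚ) = (d_ β : ℚ) :=
      mul_right_cancel₀ hb0pos.ne' (by rw [← h1, ← h2, h])
    exact_mod_cast this
  -- order facts
  have hζ0 : ζ ≠ 0 := hζ.ne_zero hℓ.ne'
  have hrpos : 0 < r := by
    rw [hr]
    refine (isOfFinOrder_iff_pow_eq_one.mpr ⟨ℓ, hℓ, ?_⟩).orderOf_pos
    rw [← pow_mul, mul_comm, pow_mul, hζ.pow_eq_one, one_pow]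
  have hζ2r : ζ ^ (2 * r) = 1 := by
    rw [pow_mul, hr, pow_orderOf_eq_one]
  -- the positive functional
  have hli' : LinearIndepOn ℚ id Pi := hli
  have hext := hli'.subset_extend (Set.subset_univ Pi)
  set bV : Module.Basis _ ℚ V := Module.Basis.extend hli' with hbV
  set φ : V →ₗ[ℚ] ℚ := bV.constr ℚ (fun _ => (1 : ℚ)) with hφ
  have hφPi : ∀ a ∈ Pi, φ a = 1 := by
    intro a ha
    have h1 : a = bV ⟨a, hext ha⟩ := (Module.Basis.extend_apply_self hli' ⟨a, hext ha⟩).symm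
    rw [h1, hφ, Module.Basis.constr_basis]
  have hφcl : ∀ x ∈ AddSubmonoid.closure Pi, 0 ≤ φ x ∧ (φ x = 0 → x = 0) := by
    intro x hx
    refine AddSubmonoid.closure_induction ?_ ?_ ?_ hx
    · intro a ha
      rw [hφPi a ha]
      exact ⟨zero_le_one, fun h => absurd h one_ne_zero⟩
    · simp
    · rintro a b _ _ ⟨ha1, ha2⟩ ⟨hb1, hb2⟩
      refine ⟨by rw [map_add]; linarith, ?_⟩
      intro h
      rw [map_add] at h
      have hφa : φ a = 0 := by linarith
      have hφb : φ b = 0 := by linarith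
      rw [ha2 hφa, hb2 hφb, add_zero]
  -- facts about T
  have hTmem : ∀ a : V, a ∈ T ↔ a ∈ Δ ∧ a ∈ AddSubmonoid.closure Pi := by
    intro a
    rw [← Finset.mem_coe, hT]
    exact Iff.rfl
  have hTΔ : ∀ a ∈ T, a ∈ Δ := fun a ha => ((hTmem a).1 ha).1
  have hTpos : ∀ γ ∈ Δ, γ ∈ T ∨ -γ ∈ T := by
    intro γ hγ
    rcases hcl γ hγ with h | h
    · exact Or.inl ((hTmem γ).2 ⟨hγ, h⟩)
    · exact Or.inr ((hTmem (-γ)).2 ⟨hnegmem γ hγ, h⟩)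
  have hTneg : ∀ a ∈ T, -a ∉ T := by
    intro a ha hna
    have h1 := (hTmem a).1 ha
    have h2 := (hTmem (-a)).1 hna
    have ha0 := hφcl a h1.2
    have hb0 := hφcl (-a) h2.2
    have hphia : φ a = 0 := by
      have := hb0.1
      rw [map_neg] at this
      linarith [ha0.1]
    exact hne0 a h1.1 (ha0.2 hphia)
  have h2ρ : (2 : ℚ) • ρt = ∑ β ∈ T, (d_ β : ℚ) • coroot B β := by
    rw [hρ, smul_smul]
    norm_num
  -- the key predicate
  set Good : (V ≃ₗ[ℚ] V) → Prop := fun u =>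
    ∀ lam : V, (∀ γ ∈ Δ, ∃ n : ℤ, B lam (coroot B γ) = ((r / Nat.gcd r (d_ γ) : ℕ) : ℚ) * n) →
      (∀ γ ∈ Δ, ∃ n : ℤ, B (u lam) (coroot B γ) = ((r / Nat.gcd r (d_ γ) : ℕ) : ℚ) * n) ∧
      ∃ n : ℤ, B (u lam - lam) ((2 : ℚ) • ρt) = n ∧ ζ ^ n = 1 with hGood
  -- generators are good
  have hgen : ∀ (u : V ≃ₗ[ℚ] V) (α : V), α ∈ Δ →
      (∀ v : V, u v = v - B v (coroot B α) • α) → Good u := by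
    intro u α hαΔ hu
    intro lam hlam
    set s : V → V := fun v => v - B v (coroot B α) • α with hs
    have hus : ∀ v, u v = s v := hu
    have hswap : ∀ x y : V, B (s x) y = B x (s y) := by
      intro x y
      simp only [hs, map_sub, map_smul, LinearMap.sub_apply, LinearMap.smul_apply, smul_eq_mul]
      rw [hcorg α x, hcorg α y, hsymm α y]
      ring
    have hinvol : ∀ v : V, s (s v) = v := by
      intro v
      show s v - B (s v) (coroot B α) • α = v
      have hBsv : B (s v) (coroot B α) = - B v (coroot B α) := by
        simp only [hs, map_sub, map_smul, LinearMap.sub_apply, LinearMap.smul_apply, smul_eq_mul]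
        rw [hpair2 α hαΔ]
        ring
      rw [hBsv]
      show (v - B v (coroot B α) • α) - (- B v (coroot B α)) • α = v
      rw [neg_smul, sub_neg_eq_add, sub_add_cancel]
    have hBs_neg : ∀ v : V, B (s v) (coroot B α) = - B v (coroot B α) := by
      intro v
      simp only [hs, map_sub, map_smul, LinearMap.sub_apply, LinearMap.smul_apply, smul_eq_mul]
      rw [hpair2 α hαΔ]
      ring
    have hs_neg : ∀ v : V, s (-v) = -(s v) := by
      intro v
      show -v - B (-v) (coroot B α) • α = -(v - B v (coroot B α) • α)
      rw [map_neg, LinearMap.neg_apply, neg_smul, sub_neg_eq_add, neg_sub']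
      abel
    have hsΔ : ∀ β ∈ Δ, s β ∈ Δ := fun β hβ => hrefl α hαΔ β hβ
    have hsnorm : ∀ β : V, B (s β) (s β) = B β β := by
      intro β
      rw [hswap β (s β), hinvol]
    have hd_s : ∀ β ∈ Δ, d_ (s β) = d_ β :=
      fun β hβ => hdcongr (s β) (hsΔ β hβ) β hβ (hsnorm β)
    have hcor_s : ∀ β : V, B lam (coroot B (s β)) = B (s lam) (coroot B β) := by
      intro β
      rw [hcorg, hcorg, hsnorm β, hswap lam β]
    constructor
    · -- stability of the lattice
      intro β hβ
      obtain ⟨n, hn⟩ := hlam (s β) (hsΔ β hβ)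
      rw [hd_s β hβ] at hn
      exact ⟨n, by rw [hus lam, ← hcor_s β]; exact hn⟩
    · -- the exponent
      obtain ⟨m, hm⟩ := hlam α hαΔ
      have hcint : ∀ β ∈ Δ, (((B β (coroot B α)).num : ℚ)) = B β (coroot B α) := by
        intro β hβ
        obtain ⟨n, hn⟩ := hcrys α hαΔ β hβ
        rw [hn]
        norm_num
      -- evenness of the sum of pairings over T
      have hsum0 : (∑ β ∈ T, ((B β (coroot B α)).num : ZMod 2)) = 0 := by
        refine Finset.sum_involution (fun a _ => if s a ∈ T then s a else -(s a)) ?_ ?_ ?_ ?_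
        · intro a ha
          by_cases hc : s a ∈ T
          · simp only [hc, if_pos]
            have : (B (s a) (coroot B α)).num = -(B a (coroot B α)).num := by
              rw [hBs_neg a]; rfl
            rw [this]
            push_cast
            ring
          · simp only [hc, if_neg, not_false_iff]
            have h1 : B (-(s a)) (coroot B α) = B a (coroot B α) := by
              rw [map_neg, LinearMap.neg_apply, hBs_neg a, neg_neg]
            rw [h1]
            exact CharTwo.add_self_eq_zero _
        · intro a ha hfa
          by_cases hc : s a ∈ T
          · simp only [hc, if_pos]
            intro heq
            have : B a (coroot B α) • α = 0 := by
              have := sub_eq_self.mp heq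
              exact this
            have hq0 : B a (coroot B α) = 0 := by
              rcases smul_eq_zero.mp this with h | h
              · exact h
              · exact absurd h (hne0 α hαΔ)
            apply hfa
            rw [hq0]
            norm_num
          · simp only [hc, if_neg, not_false_iff]
            intro heq
            -- -(s a) = a, i.e. s a = -a, i.e. a - q•α = -a, so (q/2)•α = a
            have hsa : s a = -a := neg_eq_iff_eq_neg.mp heq
            have h2a : (B a (coroot B α) / 2) • α = a := by
              have hX : a - B a (coroot B α) • α = -a := hsa
              have h2 : B a (coroot B α) • α = (2 : ℚ) • a := by
                linear_combination (norm := module) -hX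
              have h3 : ((2 : ℚ)⁻¹ * B a (coroot B α)) • α = a := by
                rw [← smul_smul, h2, smul_smul]
                rw [show (2 : ℚ)⁻¹ * 2 = 1 by norm_num, one_smul]
              rw [div_eq_inv_mul]
              exact h3
            have haΔ := hTΔ a ha
            rcases hred α hαΔ _ (h2a ▸ haΔ) with h | h
            · apply hfa
              have : B a (coroot B α) = 2 := by
                field_simp at h
                linarith
              rw [this]
              decide
            · apply hfa
              have : B a (coroot B α) = -2 := by
                field_simp at h
                linarith
              rw [this]
              decide
        · intro a ha
          by_cases hc : s a ∈ T
          · simpa only [hc, if_pos] using hc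
          · simp only [hc, if_neg, not_false_iff]
            rcases hTpos (s a) (hsΔ a (hTΔ a ha)) with h | h
            · exact absurd h hc
            · exact h
        · intro a ha
          by_cases hc : s a ∈ T
          · simp only [hc, if_pos]
            rw [if_pos]
            · exact hinvol a
            · rw [hinvol a]; exact ha
          · simp only [hc, if_neg, not_false_iff]
            rw [if_neg]
            · rw [hs_neg (s a), hinvol a, neg_neg]
            · rw [hs_neg (s a), hinvol a]
              exact hTneg a ha
      have hKeven : (2 : ℤ) ∣ ∑ β ∈ T, (B β (coroot B α)).num := by
        have hcast : ((∑ β ∈ T, (B β (coroot B α)).num : ℤ) : ZMod 2) = 0 := by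
          push_cast
          exact hsum0
        exact (ZMod.intCast_zmod_eq_zero_iff_dvd _ 2).mp hcast
      obtain ⟨K₁, hK₁⟩ := hKeven
      -- the sum identity
      have hterm : ∀ β ∈ T, (d_ β : ℚ) * B α (coroot B β)
          = (d_ α : ℚ) * ((B β (coroot B α)).num : ℚ) := by
        intro β hβT
        have hβΔ := hTΔ β hβT
        rw [hcint β hβΔ, hcorg, hcorg, hdEq β hβΔ, hdEq α hαΔ, hsymm β α]
        have h1 : (d_ β : ℚ) ≠ 0 := (hdpos β hβΔ).ne'
        have h2 : (d_ α : ℚ) ≠ 0 := (hdpos α hαΔ).ne'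
        have h3 : B β₀ β₀ ≠ 0 := hb0pos.ne'
        field_simp
      have hdiff : u lam - lam = (-(B lam (coroot B α))) • α := by
        rw [hus lam]
        show (lam - B lam (coroot B α) • α) - lam = _
        rw [neg_smul]
        abel
      have hsum : B (u lam - lam) ((2 : ℚ) • ρt)
          = -(B lam (coroot B α)) * ((d_ α : ℚ) * ((∑ β ∈ T, (B β (coroot B α)).num : ℤ) : ℚ)) := by
        rw [hdiff, h2ρ, map_smul, LinearMap.smul_apply, map_sum, smul_eq_mul]
        congr 1
        calc ∑ x ∈ T, B α ((d_ x : ℚ) • coroot B x)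
            = ∑ x ∈ T, (d_ x : ℚ) * B α (coroot B x) := by
              refine Finset.sum_congr rfl fun x _ => ?_
              rw [map_smul, smul_eq_mul]
          _ = ∑ x ∈ T, (d_ α : ℚ) * ((B x (coroot B α)).num : ℚ) :=
              Finset.sum_congr rfl hterm
          _ = (d_ α : ℚ) * ((∑ β ∈ T, (B β (coroot B α)).num : ℤ) : ℚ) := by
              rw [← Finset.mul_sum]
              push_cast
              ring
      -- arithmetic
      set g := Nat.gcd r (d_ α) with hg
      have hgpos : 0 < g := Nat.gcd_pos_of_pos_left _ hrpos
      have hgQ : (g : ℚ) ≠ 0 := by exact_mod_cast hgpos.ne'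
      have hdl : g ∣ r := by rw [hg]; exact Nat.gcd_dvd_left r (d_ α)
      have hdr : g ∣ d_ α := by rw [hg]; exact Nat.gcd_dvd_right r (d_ α)
      have hnat : (r / g) * d_ α = r * (d_ α / g) := by
        obtain ⟨r', hr'⟩ := hdl
        obtain ⟨d', hd'⟩ := hdr
        rw [hr', hd', Nat.mul_div_cancel_left _ hgpos, Nat.mul_div_cancel_left _ hgpos]
        ring
      refine ⟨-(m * 2 * K₁) * (((r / g) * d_ α : ℕ) : ℤ), ?_, ?_⟩
      · rw [hsum, hm, hK₁]
        generalize r / g = A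
        push_cast
        ring
      · rw [hnat]
        generalize d_ α / g = D
        have hsplit2 : (-(m * 2 * K₁) * ((r * D : ℕ) : ℤ))
            = ((2 * r : ℕ) : ℤ) * (-(m * K₁ * (D : ℤ))) := by
          push_cast
          ring
        rw [hsplit2, zpow_mul, zpow_natCast, hζ2r, one_zpow]
  have hGood1 : Good 1 := by
    intro lam hlam
    constructor
    · intro β hβ
      exact hlam β hβ
    · refine ⟨0, ?_, by norm_num⟩
      simp
  have hGoodmul : ∀ u v : V ≃ₗ[ℚ] V, Good u → Good v → Good (u * v) := by
    intro u v hu hv lam hlam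
    obtain ⟨hv1, n₂, hn₂, hz₂⟩ := hv lam hlam
    obtain ⟨hu1, n₁, hn₁, hz₁⟩ := hu (v lam) hv1
    have happ : ∀ x : V, (u * v) x = u (v x) := fun x => rfl
    constructor
    · intro β hβ
      obtain ⟨n, hn⟩ := hu1 β hβ
      exact ⟨n, by rw [happ]; exact hn⟩
    · refine ⟨n₁ + n₂, ?_, by rw [zpow_add₀ hζ0, hz₁, hz₂, one_mul]⟩
      have hsplit : (u * v) lam - lam = (u (v lam) - v lam) + (v lam - lam) := by
        rw [happ]; abel
      rw [hsplit, map_add, LinearMap.add_apply, hn₁, hn₂]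
      push_cast
      ring
  intro w hw
  have hGw : Good w ∧ Good w⁻¹ := by
    refine Subgroup.closure_induction (p := fun x _ => Good x ∧ Good x⁻¹) ?_ ?_ ?_ ?_ hw
    · rintro x ⟨α, hα, hx⟩
      have hxinv : ∀ v : V, x⁻¹ v = v - B v (coroot B α) • α := by
        intro v
        have hh : x (v - B v (coroot B α) • α) = v := by
          rw [hx]
          have hBsv : B (v - B v (coroot B α) • α) (coroot B α) = - B v (coroot B α) := by
            simp only [map_sub, map_smul, LinearMap.sub_apply, LinearMap.smul_apply, smul_eq_mul]
            rw [hpair2 α hα]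
            ring
          rw [hBsv, neg_smul, sub_neg_eq_add, sub_add_cancel]
        show x.symm v = v - B v (coroot B α) • α
        rw [LinearEquiv.symm_apply_eq, hh]
      exact ⟨hgen x α hα hx, hgen x⁻¹ α hα hxinv⟩
    · refine ⟨hGood1, ?_⟩
      rw [inv_one]
      exact hGood1
    · rintro x y _ _ ⟨hx1, hx2⟩ ⟨hy1, hy2⟩
      refine ⟨hGoodmul x y hx1 hy1, ?_⟩
      rw [mul_inv_rev]
      exact hGoodmul _ _ hy2 hx2
    · rintro x _ ⟨h1, h2⟩
      exact ⟨h2, by rwa [inv_inv]⟩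
  intro lam hlam
  exact (hGw.1 lam hlam).2


end ZetaCenter
end
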